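/- arXiv:2209.02307 — 5 statements merged into one kernel-verified Lean document; each statement's English description precedes it below -/
import Mathlib

section
/- For every formula φ of coSafetyLTL\{wX} (the fragment of LTL in negation normal form whose only temporal operators are X and U), the finite-word language of φ is closed under appending arbitrary finite suffixes, i.e., L_fin(φ) = L_fin(φ)·(2^Σ)^*. -/
namespace CoSafetyPaper

/-- LTL formulas in negation normal form over proposition letters `PL`. -/
inductive LTLF (PL : Type) : Type
  | pos : PL → LTLF PL                      -- p
  | nneg : PL → LTLF PL                     -- ¬p
  | disj : LTLF PL → LTLF PL → LTLF PL      -- φ ∨ ψ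
  | conj : LTLF PL → LTLF PL → LTLF PL      -- φ ∧ ψ
  | next : LTLF PL → LTLF PL                -- X φ
  | wnext : LTLF PL → LTLF PL               -- wX φ
  | untl : LTLF PL → LTLF PL → LTLF PL      -- φ U ψ
  | rel : LTLF PL → LTLF PL → LTLF PL       -- φ R ψ

/-- Satisfaction of an LTL formula by a word given as `σ : ℕ → Set PL`
together with a length `L : ℕ∞` (`⊤` for infinite words), at position `i`. -/
def Sat {PL : Type} (σ : ℕ → Set PL) (L : ℕ∞) : LTLF PL → ℕ → Prop
  | .pos p, i => p ∈ σ i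
  | .nneg p, i => p ∉ σ i
  | .disj φ ψ, i => Sat σ L φ i ∨ Sat σ L ψ i
  | .conj φ ψ, i => Sat σ L φ i ∧ Sat σ L ψ i
  | .next φ, i => ((i + 1 : ℕ) : ℕ∞) < L ∧ Sat σ L φ (i + 1)
  | .wnext φ, i => ((i + 1 : ℕ) : ℕ∞) = L ∨ Sat σ L φ (i + 1)
  | .untl φ ψ, i => ∃ j : ℕ, i ≤ j ∧ (j : ℕ∞) < L ∧ Sat σ L ψ j ∧
      ∀ k : ℕ, i ≤ k → k < j → Sat σ L φ k
  | .rel φ ψ, i =>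
      (∀ j : ℕ, i ≤ j → (j : ℕ∞) < L → Sat σ L ψ j) ∨
      (∃ k : ℕ, i ≤ k ∧ (k : ℕ∞) < L ∧ Sat σ L φ k ∧
        ∀ j : ℕ, i ≤ j → j ≤ k → Sat σ L ψ j)

/-- The function `ℕ → Set PL` associated with a finite word (a list of letters). -/
def wordOf {PL : Type} (xs : List (Set PL)) : ℕ → Set PL := fun n => xs.getD n ∅

/-- Satisfaction over a finite word. -/
def FinSat {PL : Type} (xs : List (Set PL)) (φ : LTLF PL) (i : ℕ) : Prop :=
  Sat (wordOf xs) (xs.length : ℕ∞) φ i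

/-- `L_fin(φ)`: the nonempty finite words satisfying `φ` (at position 0). -/
def LfinL {PL : Type} (φ : LTLF PL) : Set (List (Set PL)) :=
  {xs | xs ≠ [] ∧ FinSat xs φ 0}

/-- `L(φ)`: the infinite words satisfying `φ` (at position 0). -/
def LinfL {PL : Type} (φ : LTLF PL) : Set (ℕ → Set PL) :=
  {σ | Sat σ ⊤ φ 0}

/-- `L·(2^Σ)^*` : concatenation of a language of finite words with all finite words. -/
def catFin {PL : Type} (Lg : Set (List (Set PL))) : Set (List (Set PL)) :=
  {w | ∃ u ∈ Lg, ∃ v : List (Set PL), w = u ++ v}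

/-- Concatenation of a finite word with an infinite word. -/
def listConc {PL : Type} (u : List (Set PL)) (v : ℕ → Set PL) : ℕ → Set PL :=
  fun n => if n < u.length then wordOf u n else v (n - u.length)

/-- `L·(2^Σ)^ω` : concatenation of a language of finite words with all infinite words. -/
def catInf {PL : Type} (Lg : Set (List (Set PL))) : Set (ℕ → Set PL) :=
  {w | ∃ u ∈ Lg, ∃ v : ℕ → Set PL, w = listConc u v}

/-- The prefix `σ_[0,i]` of an infinite word, as a list. -/
def prefixList {PL : Type} (σ : ℕ → Set PL) (i : ℕ) : List (Set PL) :=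
  (List.range (i + 1)).map σ

/-- co-safety ω-languages. -/
def IsCoSafetyLang {PL : Type} (Lg : Set (ℕ → Set PL)) : Prop :=
  ∀ σ ∈ Lg, ∃ i : ℕ, ∀ σ' : ℕ → Set PL, listConc (prefixList σ i) σ' ∈ Lg

/-- safety ω-languages. -/
def IsSafetyLang {PL : Type} (Lg : Set (ℕ → Set PL)) : Prop :=
  ∀ σ : ℕ → Set PL, σ ∉ Lg → ∃ i : ℕ, ∀ σ' : ℕ → Set PL, listConc (prefixList σ i) σ' ∉ Lg

/-- co-safety languages of finite words. -/
def IsCoSafetyLangFin {PL : Type} (Lg : Set (List (Set PL))) : Prop :=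
  (∀ σ ∈ Lg, σ ≠ []) ∧
  ∀ σ ∈ Lg, ∃ i < σ.length, ∀ σ' : List (Set PL), σ.take (i + 1) ++ σ' ∈ Lg

/-- safety languages of finite words. -/
def IsSafetyLangFin {PL : Type} (Lg : Set (List (Set PL))) : Prop :=
  (∀ σ ∈ Lg, σ ≠ []) ∧
  ∀ σ : List (Set PL), σ ≠ [] → σ ∉ Lg →
    ∃ i < σ.length, ∀ σ' : List (Set PL), σ.take (i + 1) ++ σ' ∉ Lg

/-- coSafetyLTL: only X, wX and U as temporal operators. -/
inductive CoSafetyLTL {PL : Type} : LTLF PL → Prop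
  | pos (p : PL) : CoSafetyLTL (.pos p)
  | nneg (p : PL) : CoSafetyLTL (.nneg p)
  | disj {φ ψ : LTLF PL} : CoSafetyLTL φ → CoSafetyLTL ψ → CoSafetyLTL (.disj φ ψ)
  | conj {φ ψ : LTLF PL} : CoSafetyLTL φ → CoSafetyLTL ψ → CoSafetyLTL (.conj φ ψ)
  | next {φ : LTLF PL} : CoSafetyLTL φ → CoSafetyLTL (.next φ)
  | wnext {φ : LTLF PL} : CoSafetyLTL φ → CoSafetyLTL (.wnext φ)
  | untl {φ ψ : LTLF PL} : CoSafetyLTL φ → CoSafetyLTL ψ → CoSafetyLTL (.untl φ ψ)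

/-- coSafetyLTL without the weak tomorrow operator: only X and U. -/
inductive CoSafetyLTLnoW {PL : Type} : LTLF PL → Prop
  | pos (p : PL) : CoSafetyLTLnoW (.pos p)
  | nneg (p : PL) : CoSafetyLTLnoW (.nneg p)
  | disj {φ ψ : LTLF PL} : CoSafetyLTLnoW φ → CoSafetyLTLnoW ψ → CoSafetyLTLnoW (.disj φ ψ)
  | conj {φ ψ : LTLF PL} : CoSafetyLTLnoW φ → CoSafetyLTLnoW ψ → CoSafetyLTLnoW (.conj φ ψ)
  | next {φ : LTLF PL} : CoSafetyLTLnoW φ → CoSafetyLTLnoW (.next φ)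
  | untl {φ ψ : LTLF PL} : CoSafetyLTLnoW φ → CoSafetyLTLnoW ψ → CoSafetyLTLnoW (.untl φ ψ)

/-- SafetyLTL: only X, wX and R as temporal operators. -/
inductive SafetyLTL {PL : Type} : LTLF PL → Prop
  | pos (p : PL) : SafetyLTL (.pos p)
  | nneg (p : PL) : SafetyLTL (.nneg p)
  | disj {φ ψ : LTLF PL} : SafetyLTL φ → SafetyLTL ψ → SafetyLTL (.disj φ ψ)
  | conj {φ ψ : LTLF PL} : SafetyLTL φ → SafetyLTL ψ → SafetyLTL (.conj φ ψ)
  | next {φ : LTLF PL} : SafetyLTL φ → SafetyLTL (.next φ)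
  | wnext {φ : LTLF PL} : SafetyLTL φ → SafetyLTL (.wnext φ)
  | rel {φ ψ : LTLF PL} : SafetyLTL φ → SafetyLTL ψ → SafetyLTL (.rel φ ψ)

/-- SafetyLTL without the tomorrow operator: only wX and R. -/
inductive SafetyLTLnoX {PL : Type} : LTLF PL → Prop
  | pos (p : PL) : SafetyLTLnoX (.pos p)
  | nneg (p : PL) : SafetyLTLnoX (.nneg p)
  | disj {φ ψ : LTLF PL} : SafetyLTLnoX φ → SafetyLTLnoX ψ → SafetyLTLnoX (.disj φ ψ)
  | conj {φ ψ : LTLF PL} : SafetyLTLnoX φ → SafetyLTLnoX ψ → SafetyLTLnoX (.conj φ ψ)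
  | wnext {φ : LTLF PL} : SafetyLTLnoX φ → SafetyLTLnoX (.wnext φ)
  | rel {φ ψ : LTLF PL} : SafetyLTLnoX φ → SafetyLTLnoX ψ → SafetyLTLnoX (.rel φ ψ)

/-- First-order formulas over words: signature `<`, `=`, and a unary predicate
for each proposition letter; variables are natural numbers. -/
inductive FOW (PL : Type) : Type
  | lt : ℕ → ℕ → FOW PL
  | eq : ℕ → ℕ → FOW PL
  | pred : PL → ℕ → FOW PL
  | not : FOW PL → FOW PL
  | disj : FOW PL → FOW PL → FOW PL
  | conj : FOW PL → FOW PL → FOW PL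
  | ex : ℕ → FOW PL → FOW PL
  | all : ℕ → FOW PL → FOW PL

/-- First-order satisfaction over a word `σ` with length `L : ℕ∞` (`⊤` for
infinite words) under a valuation `v` of the variables into positions. -/
def FOSat {PL : Type} (σ : ℕ → Set PL) (L : ℕ∞) : FOW PL → (ℕ → ℕ) → Prop
  | .lt x y, v => v x < v y
  | .eq x y, v => v x = v y
  | .pred p x, v => p ∈ σ (v x)
  | .not φ, v => ¬ FOSat σ L φ v
  | .disj φ ψ, v => FOSat σ L φ v ∨ FOSat σ L ψ v
  | .conj φ ψ, v => FOSat σ L φ v ∧ FOSat σ L ψ v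
  | .ex x φ, v => ∃ n : ℕ, (n : ℕ∞) < L ∧ FOSat σ L φ (Function.update v x n)
  | .all x φ, v => ∀ n : ℕ, (n : ℕ∞) < L → FOSat σ L φ (Function.update v x n)

/-- Free variables of a first-order formula. -/
def FOW.free {PL : Type} : FOW PL → Finset ℕ
  | .lt x y => {x, y}
  | .eq x y => {x, y}
  | .pred _ x => {x}
  | .not φ => φ.free
  | .disj φ ψ => φ.free ∪ ψ.free
  | .conj φ ψ => φ.free ∪ ψ.free
  | .ex x φ => φ.free.erase x
  | .all x φ => φ.free.erase x

/-- `φ → ψ` as an abbreviation. -/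
def FOW.impl {PL : Type} (φ ψ : FOW PL) : FOW PL := .disj (.not φ) ψ

/-- `y ≤ x` as an abbreviation. -/
def FOW.le {PL : Type} (y x : ℕ) : FOW PL := .disj (.lt y x) (.eq y x)

/-- The coSafetyFO fragment:
`φ ::= x<y | x=y | x≠y | P(x) | ¬P(x) | φ∨φ | φ∧φ | ∃y(x<y ∧ φ) | ∀y(x<y<z → φ)`. -/
inductive CoSafetyFO {PL : Type} : FOW PL → Prop
  | lt (x y : ℕ) : CoSafetyFO (.lt x y)
  | eq (x y : ℕ) : CoSafetyFO (.eq x y)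
  | ne (x y : ℕ) : CoSafetyFO (.not (.eq x y))
  | pred (p : PL) (x : ℕ) : CoSafetyFO (.pred p x)
  | npred (p : PL) (x : ℕ) : CoSafetyFO (.not (.pred p x))
  | disj {φ ψ : FOW PL} : CoSafetyFO φ → CoSafetyFO ψ → CoSafetyFO (.disj φ ψ)
  | conj {φ ψ : FOW PL} : CoSafetyFO φ → CoSafetyFO ψ → CoSafetyFO (.conj φ ψ)
  | ex (x y : ℕ) {φ : FOW PL} : CoSafetyFO φ →
      CoSafetyFO (.ex y (.conj (.lt x y) φ))
  | all (x y z : ℕ) {φ : FOW PL} : CoSafetyFO φ →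
      CoSafetyFO (.all y (FOW.impl (.conj (.lt x y) (.lt y z)) φ))

/-- The SafetyFO fragment:
`φ ::= x<y | x=y | x≠y | P(x) | ¬P(x) | φ∨φ | φ∧φ | ∃y(x<y<z ∧ φ) | ∀y(x<y → φ)`. -/
inductive SafetyFO {PL : Type} : FOW PL → Prop
  | lt (x y : ℕ) : SafetyFO (.lt x y)
  | eq (x y : ℕ) : SafetyFO (.eq x y)
  | ne (x y : ℕ) : SafetyFO (.not (.eq x y))
  | pred (p : PL) (x : ℕ) : SafetyFO (.pred p x)
  | npred (p : PL) (x : ℕ) : SafetyFO (.not (.pred p x))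
  | disj {φ ψ : FOW PL} : SafetyFO φ → SafetyFO ψ → SafetyFO (.disj φ ψ)
  | conj {φ ψ : FOW PL} : SafetyFO φ → SafetyFO ψ → SafetyFO (.conj φ ψ)
  | ex (x y z : ℕ) {φ : FOW PL} : SafetyFO φ →
      SafetyFO (.ex y (.conj (.conj (.lt x y) (.lt y z)) φ))
  | all (x y : ℕ) {φ : FOW PL} : SafetyFO φ →
      SafetyFO (.all y (FOW.impl (.lt x y) φ))

/-- A formula has exactly one free variable. -/
def HasOneFree {PL : Type} (φ : FOW PL) : Prop := ∃ x : ℕ, φ.free = {x}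

/-- `L_fin(φ(x))` for a first-order formula with (exactly one) free variable:
nonempty finite words that satisfy it with the free variable interpreted as `0`. -/
def LfinFO {PL : Type} (φ : FOW PL) : Set (List (Set PL)) :=
  {xs | xs ≠ [] ∧ FOSat (wordOf xs) (xs.length : ℕ∞) φ (fun _ => 0)}

/-- `L(φ(x))` for a first-order formula with (exactly one) free variable:
infinite words that satisfy it with the free variable interpreted as `0`. -/
def LinfFO {PL : Type} (φ : FOW PL) : Set (ℕ → Set PL) :=
  {σ | FOSat σ ⊤ φ (fun _ => 0)}

/-- `⟦coSafetyFO⟧_fin`. -/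
def CoSafetyFOFin (PL : Type) : Set (Set (List (Set PL))) :=
  {Lg | ∃ φ : FOW PL, CoSafetyFO φ ∧ HasOneFree φ ∧ Lg = LfinFO φ}

/-- `⟦coSafetyFO⟧`. -/
def CoSafetyFOInf (PL : Type) : Set (Set (ℕ → Set PL)) :=
  {Lg | ∃ φ : FOW PL, CoSafetyFO φ ∧ HasOneFree φ ∧ Lg = LinfFO φ}

/-- `⟦SafetyFO⟧_fin`. -/
def SafetyFOFin (PL : Type) : Set (Set (List (Set PL))) :=
  {Lg | ∃ φ : FOW PL, SafetyFO φ ∧ HasOneFree φ ∧ Lg = LfinFO φ}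

/-- `⟦FO⟧_fin` (formulas with exactly one free variable). -/
def FOFin (PL : Type) : Set (Set (List (Set PL))) :=
  {Lg | ∃ φ : FOW PL, HasOneFree φ ∧ Lg = LfinFO φ}

/-- `⟦coSafetyLTL⟧_fin`. -/
def CoSafetyLTLFin (PL : Type) : Set (Set (List (Set PL))) :=
  {Lg | ∃ φ : LTLF PL, CoSafetyLTL φ ∧ Lg = LfinL φ}

/-- `⟦coSafetyLTL\{wX}⟧_fin`. -/
def CoSafetyLTLnoWFin (PL : Type) : Set (Set (List (Set PL))) :=
  {Lg | ∃ φ : LTLF PL, CoSafetyLTLnoW φ ∧ Lg = LfinL φ}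

/-- `⟦SafetyLTL⟧_fin`. -/
def SafetyLTLFin (PL : Type) : Set (Set (List (Set PL))) :=
  {Lg | ∃ φ : LTLF PL, SafetyLTL φ ∧ Lg = LfinL φ}

/-- `⟦SafetyLTL\{X}⟧_fin`. -/
def SafetyLTLnoXFin (PL : Type) : Set (Set (List (Set PL))) :=
  {Lg | ∃ φ : LTLF PL, SafetyLTLnoX φ ∧ Lg = LfinL φ}

/-- `⟦LTL⟧_fin`. -/
def LTLFin (PL : Type) : Set (Set (List (Set PL))) :=
  {Lg | ∃ φ : LTLF PL, Lg = LfinL φ}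

/-- `⟦LTL⟧`. -/
def LTLInf (PL : Type) : Set (Set (ℕ → Set PL)) :=
  {Lg | ∃ φ : LTLF PL, Lg = LinfL φ}

/-- `⟦coSafetyLTL⟧`. -/
def CoSafetyLTLInf (PL : Type) : Set (Set (ℕ → Set PL)) :=
  {Lg | ∃ φ : LTLF PL, CoSafetyLTL φ ∧ Lg = LinfL φ}

/-- `⟦SafetyLTL⟧`. -/
def SafetyLTLInf (PL : Type) : Set (Set (ℕ → Set PL)) :=
  {Lg | ∃ φ : LTLF PL, SafetyLTL φ ∧ Lg = LinfL φ}

/-- Quantifier-free first-order formulas in one (implicit) variable, i.e.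
boolean combinations of the atoms `P(x)`, `x=x`, `x<x`. -/
inductive QF (PL : Type) : Type
  | tru : QF PL
  | fls : QF PL
  | pos : PL → QF PL
  | qnot : QF PL → QF PL
  | qor : QF PL → QF PL → QF PL
  | qand : QF PL → QF PL → QF PL

/-- Evaluation of a quantifier-free one-variable formula at a letter. -/
def QF.sat {PL : Type} (s : Set PL) : QF PL → Prop
  | .tru => True
  | .fls => False
  | .pos p => p ∈ s
  | .qnot φ => ¬ QF.sat s φ
  | .qor φ ψ => QF.sat s φ ∨ QF.sat s ψ
  | .qand φ ψ => QF.sat s φ ∧ QF.sat s ψ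

/-- An ∃-formula with free variables `z₀,…,z_m`:
`∃x₀…∃x_n (x₀<⋯<x_n ∧ z₀=x₀ ∧ ⋀ z_k=x_{i_k} ∧ ⋀ α_j(x_j) ∧ ⋀ ∀y(x_{j−1}<y<x_j → β_j(y)))`. -/
structure ExForm (PL : Type) (m : ℕ) where
  n : ℕ
  bind : Fin m → Fin (n + 1)
  alpha : Fin (n + 1) → QF PL
  beta : Fin n → QF PL

/-- Satisfaction of an ∃-formula on the word `σ` of length `L` (`⊤` if infinite),
where `z : Fin (m+1) → ℕ` interprets the free variables `z₀,…,z_m`. -/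
def ExForm.ESat {PL : Type} {m : ℕ} (e : ExForm PL m) (σ : ℕ → Set PL) (L : ℕ∞)
    (z : Fin (m + 1) → ℕ) : Prop :=
  ∃ x : Fin (e.n + 1) → ℕ,
    StrictMono x ∧
    (∀ j : Fin (e.n + 1), ((x j : ℕ) : ℕ∞) < L) ∧
    z 0 = x 0 ∧
    (∀ k : Fin m, z k.succ = x (e.bind k)) ∧
    (∀ j : Fin (e.n + 1), (e.alpha j).sat (σ (x j))) ∧
    (∀ j : Fin e.n, ∀ y : ℕ, x j.castSucc < y → y < x j.succ → (e.beta j).sat (σ y))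

/-- Satisfaction of a disjunction of ∃-formulas. -/
def DisjESat {PL : Type} {m : ℕ} (ds : List (ExForm PL m)) (σ : ℕ → Set PL) (L : ℕ∞)
    (z : Fin (m + 1) → ℕ) : Prop :=
  ∃ e ∈ ds, ExForm.ESat e σ L z

/-- Size (number of symbols) of an LTL formula. -/
def LTLF.size {PL : Type} : LTLF PL → ℕ
  | .pos _ => 1
  | .nneg _ => 2
  | .disj φ ψ => φ.size + ψ.size + 1
  | .conj φ ψ => φ.size + ψ.size + 1
  | .next φ => φ.size + 1
  | .wnext φ => φ.size + 1
  | .untl φ ψ => φ.size + ψ.size + 1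
  | .rel φ ψ => φ.size + ψ.size + 1

/-- Size (number of symbols) of a first-order formula. -/
def FOW.size {PL : Type} : FOW PL → ℕ
  | .lt _ _ => 3
  | .eq _ _ => 3
  | .pred _ _ => 2
  | .not φ => φ.size + 1
  | .disj φ ψ => φ.size + ψ.size + 1
  | .conj φ ψ => φ.size + ψ.size + 1
  | .ex _ φ => φ.size + 2
  | .all _ φ => φ.size + 2

/-- Bounded formulas relative to a variable `x`: every quantifier is of the form
`∃y(y ≤ x ∧ …)` or `∀y(y ≤ x → …)`. -/
inductive BoundedBy {PL : Type} (x : ℕ) : FOW PL → Prop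
  | lt (a b : ℕ) : BoundedBy x (.lt a b)
  | eq (a b : ℕ) : BoundedBy x (.eq a b)
  | pred (p : PL) (a : ℕ) : BoundedBy x (.pred p a)
  | not {φ : FOW PL} : BoundedBy x φ → BoundedBy x (.not φ)
  | disj {φ ψ : FOW PL} : BoundedBy x φ → BoundedBy x ψ → BoundedBy x (.disj φ ψ)
  | conj {φ ψ : FOW PL} : BoundedBy x φ → BoundedBy x ψ → BoundedBy x (.conj φ ψ)
  | ex (y : ℕ) {φ : FOW PL} : BoundedBy x φ →
      BoundedBy x (.ex y (.conj (FOW.le y x) φ))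
  | all (y : ℕ) {φ : FOW PL} : BoundedBy x φ →
      BoundedBy x (.all y (FOW.impl (FOW.le y x) φ))

/-- EBFO sentences: `∃x.φ(x)` with `φ(x)` bounded and with exactly one free variable `x`. -/
def IsEBFO {PL : Type} (ψ : FOW PL) : Prop :=
  ∃ (x : ℕ) (φ : FOW PL), ψ = .ex x φ ∧ BoundedBy x φ ∧ φ.free = {x}

/-- The ω-language of a sentence (the valuation is irrelevant). -/
def LinfSent {PL : Type} (ψ : FOW PL) : Set (ℕ → Set PL) :=
  {σ | FOSat σ ⊤ ψ (fun _ => 0)}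

lemma wordOf_append_eq {PL : Type} (xs v : List (Set PL)) (n : ℕ) (hn : n < xs.length) :
    wordOf (xs ++ v) n = wordOf xs n := by
  simp [wordOf, List.getD, List.getElem?_append_left hn]

lemma sat_append {PL : Type} {φ : LTLF PL} (h : CoSafetyLTLnoW φ)
    (xs v : List (Set PL)) :
    ∀ i : ℕ, i < xs.length → Sat (wordOf xs) (xs.length : ℕ∞) φ i →
      Sat (wordOf (xs ++ v)) ((xs ++ v).length : ℕ∞) φ i := by
  induction h with
  | pos p =>
    intro i hi hs
    simpa [Sat, wordOf_append_eq xs v i hi] using hs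
  | nneg p =>
    intro i hi hs
    simpa [Sat, wordOf_append_eq xs v i hi] using hs
  | disj hφ hψ ihφ ihψ =>
    intro i hi hs
    cases hs with
    | inl hs => exact Or.inl (ihφ i hi hs)
    | inr hs => exact Or.inr (ihψ i hi hs)
  | conj hφ hψ ihφ ihψ =>
    intro i hi hs
    exact ⟨ihφ i hi hs.1, ihψ i hi hs.2⟩
  | next hφ ih =>
    intro i hi hs
    obtain ⟨hlt, hs⟩ := hs
    have hlt' : i + 1 < xs.length := by exact_mod_cast hlt
    refine ⟨?_, ih (i + 1) hlt' hs⟩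
    have : i + 1 < (xs ++ v).length := by
      simp only [List.length_append]; omega
    exact_mod_cast this
  | untl hφ hψ ihφ ihψ =>
    intro i hi hs
    obtain ⟨j, hij, hjL, hsj, hk⟩ := hs
    have hj' : j < xs.length := by exact_mod_cast hjL
    refine ⟨j, hij, ?_, ihψ j hj' hsj, fun k hik hkj => ihφ k (by omega) (hk k hik hkj)⟩
    have : j < (xs ++ v).length := by
      simp only [List.length_append]; omega
    exact_mod_cast this

end CoSafetyPaper
open CoSafetyPaper in
/-- For every formula φ of coSafetyLTL\{wX}, the finite-word
language of φ is closed under appending arbitrary finite suffixes: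
`L_fin(φ) = L_fin(φ)·(2^Σ)^*`. -/
theorem cosafetyltl_noW_fin_closed_under_suffix
    (PL : Type) [Fintype PL] (φ : LTLF PL) (h : CoSafetyLTLnoW φ) :
    LfinL φ = catFin (LfinL φ) := by
  ext w
  constructor
  · intro hw
    exact ⟨w, hw, [], by simp⟩
  · rintro ⟨u, ⟨hne, hu⟩, v, rfl⟩
    refine ⟨by simp [hne], ?_⟩
    have h0 : 0 < u.length := List.length_pos_iff.mpr hne
    exact sat_append h u v 0 h0 hu
end

section
/- For every formula φ of coSafetyLTL\{wX} (the fragment of LTL in negation normal form whose only temporal operators are X and U), the infinite-word language of φ equals the concatenation of its finite-word language with all infinite words, i.e., L(φ) = L_fin(φ)·(2^Σ)^ω. -/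
namespace CoSafetyPaper

section Aux
variable {PL : Type}

lemma sat_mono {φ : LTLF PL} (h : CoSafetyLTLnoW φ) :
    ∀ {σ σ' : ℕ → Set PL} {L L' : ℕ∞}, L ≤ L' →
    (∀ n : ℕ, (n : ℕ∞) < L → σ n = σ' n) →
    ∀ {i : ℕ}, (i : ℕ∞) < L → Sat σ L φ i → Sat σ' L' φ i := by
  induction h with
  | pos p =>
    intro σ σ' L L' _ hag i hi hs
    simpa [Sat, ← hag i hi] using hs
  | nneg p =>
    intro σ σ' L L' _ hag i hi hs
    simpa [Sat, ← hag i hi] using hs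
  | disj _ _ ih1 ih2 =>
    intro σ σ' L L' hLL hag i hi hs
    rcases hs with hs | hs
    · exact Or.inl (ih1 hLL hag hi hs)
    · exact Or.inr (ih2 hLL hag hi hs)
  | conj _ _ ih1 ih2 =>
    intro σ σ' L L' hLL hag i hi hs
    exact ⟨ih1 hLL hag hi hs.1, ih2 hLL hag hi hs.2⟩
  | next _ ih =>
    intro σ σ' L L' hLL hag i hi hs
    exact ⟨lt_of_lt_of_le hs.1 hLL, ih hLL hag hs.1 hs.2⟩
  | untl _ _ ih1 ih2 =>
    intro σ σ' L L' hLL hag i hi hs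
    obtain ⟨j, hij, hjL, hψ, hk⟩ := hs
    refine ⟨j, hij, lt_of_lt_of_le hjL hLL, ih2 hLL hag hjL hψ, fun k hik hkj => ?_⟩
    have hkL : (k : ℕ∞) < L := lt_of_lt_of_le (by exact_mod_cast hkj) (le_of_lt hjL)
    exact ih1 hLL hag hkL (hk k hik hkj)

lemma coe_lt_top' (n : ℕ) : (n : ℕ∞) < ⊤ := by
  exact_mod_cast WithTop.coe_lt_top n

lemma sat_prefix {φ : LTLF PL} (h : CoSafetyLTLnoW φ) :
    ∀ {σ : ℕ → Set PL} {i : ℕ}, Sat σ ⊤ φ i →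
      ∃ N : ℕ, i < N ∧ Sat σ (N : ℕ∞) φ i := by
  induction h with
  | pos p =>
    intro σ i hs
    exact ⟨i + 1, Nat.lt_succ_self i, hs⟩
  | nneg p =>
    intro σ i hs
    exact ⟨i + 1, Nat.lt_succ_self i, hs⟩
  | disj _ _ ih1 ih2 =>
    intro σ i hs
    rcases hs with hs | hs
    · obtain ⟨N, hN, hsN⟩ := ih1 hs
      exact ⟨N, hN, Or.inl hsN⟩
    · obtain ⟨N, hN, hsN⟩ := ih2 hs
      exact ⟨N, hN, Or.inr hsN⟩
  | conj h1 h2 ih1 ih2 =>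
    intro σ i hs
    obtain ⟨N1, hN1, hs1⟩ := ih1 hs.1
    obtain ⟨N2, hN2, hs2⟩ := ih2 hs.2
    refine ⟨max N1 N2, lt_of_lt_of_le hN1 (le_max_left _ _), ?_, ?_⟩
    · exact sat_mono h1 (by exact_mod_cast le_max_left N1 N2) (fun _ _ => rfl)
        (by exact_mod_cast hN1) hs1
    · exact sat_mono h2 (by exact_mod_cast le_max_right N1 N2) (fun _ _ => rfl)
        (by exact_mod_cast hN2) hs2
  | next h1 ih =>
    intro σ i hs
    obtain ⟨N, hN, hsN⟩ := ih hs.2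
    exact ⟨N, lt_of_lt_of_le (Nat.lt_succ_self i) (Nat.le_of_lt hN),
      by exact_mod_cast hN, hsN⟩
  | untl h1 h2 ih1 ih2 =>
    intro σ i hs
    obtain ⟨j, hij, -, hψ, hk⟩ := hs
    obtain ⟨Nψ, hNψ, hsψ⟩ := ih2 hψ
    have H := fun k hik hkj => ih1 (hk k hik hkj)
    choose f hf1 hf2 using H
    classical
    set g : ℕ → ℕ := fun k => if h1 : i ≤ k then if h2 : k < j then f k h1 h2 else 0 else 0
      with hg
    set N : ℕ := max Nψ ((Finset.Ico i j).sup g) with hNdef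
    have hNψN : Nψ ≤ N := le_max_left _ _
    refine ⟨N, lt_of_le_of_lt hij (lt_of_lt_of_le hNψ hNψN), j, hij, ?_, ?_, ?_⟩
    · exact_mod_cast lt_of_lt_of_le hNψ hNψN
    · exact sat_mono h2 (by exact_mod_cast hNψN) (fun _ _ => rfl)
        (by exact_mod_cast hNψ) hsψ
    · intro k hik hkj
      have hgN : g k ≤ N :=
        le_trans (Finset.le_sup (Finset.mem_Ico.2 ⟨hik, hkj⟩)) (le_max_right _ _)
      have hgk : g k = f k hik hkj := by simp [hg, hik, hkj]
      have hkN : k < N := lt_of_lt_of_le (hf1 k hik hkj) (hgk ▸ hgN)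
      exact sat_mono h1 (by exact_mod_cast hgk ▸ hgN) (fun _ _ => rfl)
        (by exact_mod_cast hf1 k hik hkj) (hf2 k hik hkj)

lemma wordOf_prefixList (σ : ℕ → Set PL) (N n : ℕ) (hn : n < N + 1) :
    wordOf (prefixList σ N) n = σ n := by
  simp [wordOf, prefixList, List.getD, hn]

end Aux

end CoSafetyPaper
open CoSafetyPaper in
/-- For every formula φ of coSafetyLTL\{wX},
`L(φ) = L_fin(φ)·(2^Σ)^ω`. -/
theorem cosafetyltl_noW_inf_eq_fin_concat_omega
    (PL : Type) [Fintype PL] (φ : LTLF PL) (h : CoSafetyLTLnoW φ) :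
    LinfL φ = catInf (LfinL φ) := by
  ext σ
  constructor
  · intro hσ
    obtain ⟨N, hN0, hsN⟩ := sat_prefix h hσ
    obtain ⟨M, rfl⟩ : ∃ M, N = M + 1 := ⟨N - 1, (Nat.succ_pred_eq_of_pos hN0).symm⟩
    refine ⟨prefixList σ M, ⟨by simp [prefixList], ?_⟩, fun n => σ (n + (M + 1)), ?_⟩
    · show Sat (wordOf (prefixList σ M)) _ φ 0
      have hlen : (prefixList σ M).length = M + 1 := by simp [prefixList]
      rw [hlen]
      refine sat_mono h le_rfl (fun n hn => ?_) (by exact_mod_cast hN0) hsN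
      exact (wordOf_prefixList σ M n (by exact_mod_cast hn)).symm
    · funext n
      have hlen : (prefixList σ M).length = M + 1 := by simp [prefixList]
      by_cases hn : n < M + 1
      · simp [listConc, hlen, hn, wordOf_prefixList σ M n hn]
      · simp only [listConc, hlen, hn, if_false]
        rw [Nat.sub_add_cancel (Nat.le_of_not_lt hn)]
  · rintro ⟨u, ⟨hne, hu⟩, v, rfl⟩
    have hlen : 0 < u.length := List.length_pos_iff.2 hne
    refine sat_mono h le_top (fun n hn => ?_) (by exact_mod_cast hlen) hu
    have hn' : n < u.length := by exact_mod_cast hn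
    simp [listConc, hn']
end

section
/- For every formula φ of coSafetyLTL\{wX} there exists a coSafetyFO formula ψ(x) with exactly one free variable such that for every finite word σ ∈ (2^Σ)^+, σ ⊨ φ if and only if σ,0 ⊨ ψ(x); consequently ⟦coSafetyLTL\{wX}⟧_fin ⊆ ⟦coSafetyFO⟧_fin. -/
namespace CoSafetyPaper

/-- Translation of coSafetyLTL\{wX} formulas into coSafetyFO,
with free variable `x` (dummy values on `wnext` and `rel`). -/
def transFO {PL : Type} : LTLF PL → ℕ → FOW PL
  | .pos p, x => .pred p x
  | .nneg p, x => .not (.pred p x)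
  | .disj φ ψ, x => .disj (transFO φ x) (transFO ψ x)
  | .conj φ ψ, x => .conj (transFO φ x) (transFO ψ x)
  | .next φ, x => .ex (x+1) (.conj (.lt x (x+1))
      (.conj (.all (x+2) (FOW.impl (.conj (.lt x (x+2)) (.lt (x+2) (x+1))) (.not (.eq x x))))
        (transFO φ (x+1))))
  | .untl φ ψ, x => .disj (transFO ψ x) (.conj (transFO φ x)
      (.ex (x+1) (.conj (.lt x (x+1)) (.conj (transFO ψ (x+1))
        (.all (x+2) (FOW.impl (.conj (.lt x (x+2)) (.lt (x+2) (x+1))) (transFO φ (x+2))))))))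
  | .wnext _, x => .eq x x
  | .rel _ _, x => .eq x x

lemma transFO_free {PL : Type} (φ : LTLF PL) : ∀ x : ℕ, (transFO φ x).free = {x} := by
  induction φ with
  | pos p => intro x; simp [transFO, FOW.free]
  | nneg p => intro x; simp [transFO, FOW.free]
  | disj φ ψ ih1 ih2 => intro x; simp [transFO, FOW.free, ih1, ih2]
  | conj φ ψ ih1 ih2 => intro x; simp [transFO, FOW.free, ih1, ih2]
  | next φ ih =>
      intro x
      simp only [transFO, FOW.free, FOW.impl, ih]
      ext a
      simp only [Finset.mem_erase, Finset.mem_union, Finset.mem_insert, Finset.mem_singleton]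
      omega
  | wnext φ ih => intro x; simp [transFO, FOW.free]
  | untl φ ψ ih1 ih2 =>
      intro x
      simp only [transFO, FOW.free, FOW.impl, ih1, ih2]
      ext a
      simp only [Finset.mem_erase, Finset.mem_union, Finset.mem_insert, Finset.mem_singleton]
      omega
  | rel φ ψ ih1 ih2 => intro x; simp [transFO, FOW.free]

lemma transFO_cosafety {PL : Type} {φ : LTLF PL} (h : CoSafetyLTLnoW φ) :
    ∀ x : ℕ, CoSafetyFO (transFO φ x) := by
  induction h with
  | pos p => intro x; exact CoSafetyFO.pred p x
  | nneg p => intro x; exact CoSafetyFO.npred p x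
  | disj _ _ ih1 ih2 => intro x; exact CoSafetyFO.disj (ih1 x) (ih2 x)
  | conj _ _ ih1 ih2 => intro x; exact CoSafetyFO.conj (ih1 x) (ih2 x)
  | next _ ih =>
      intro x
      exact CoSafetyFO.ex x (x+1)
        (CoSafetyFO.conj (CoSafetyFO.all x (x+2) (x+1) (CoSafetyFO.ne x x)) (ih (x+1)))
  | untl _ _ ih1 ih2 =>
      intro x
      exact CoSafetyFO.disj (ih2 x)
        (CoSafetyFO.conj (ih1 x)
          (CoSafetyFO.ex x (x+1)
            (CoSafetyFO.conj (ih2 (x+1))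
              (CoSafetyFO.all x (x+2) (x+1) (ih1 (x+2))))))

lemma transFO_correct {PL : Type} {φ : LTLF PL} (h : CoSafetyLTLnoW φ) :
    ∀ (x : ℕ) (σ : ℕ → Set PL) (L : ℕ∞) (v : ℕ → ℕ), ((v x : ℕ∞) < L) →
      (FOSat σ L (transFO φ x) v ↔ Sat σ L φ (v x)) := by
  induction h with
  | pos p => intro x σ L v _; exact Iff.rfl
  | nneg p => intro x σ L v _; exact Iff.rfl
  | disj _ _ ih1 ih2 =>
      intro x σ L v hv
      exact or_congr (ih1 x σ L v hv) (ih2 x σ L v hv)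
  | conj _ _ ih1 ih2 =>
      intro x σ L v hv
      exact and_congr (ih1 x σ L v hv) (ih2 x σ L v hv)
  | next _ ih =>
      intro x σ L v hv
      have e1 : ∀ n : ℕ, Function.update v (x+1) n x = v x :=
        fun n => Function.update_of_ne (by omega) _ _
      have e2 : ∀ n : ℕ, Function.update v (x+1) n (x+1) = n :=
        fun n => Function.update_self _ _ _
      have e3 : ∀ n k : ℕ,
          Function.update (Function.update v (x+1) n) (x+2) k x = v x := by
        intro n k
        rw [Function.update_of_ne (by omega), e1]
      have e4 : ∀ n k : ℕ,
          Function.update (Function.update v (x+1) n) (x+2) k (x+1) = n := by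
        intro n k
        rw [Function.update_of_ne (by omega), e2]
      have e5 : ∀ n k : ℕ,
          Function.update (Function.update v (x+1) n) (x+2) k (x+2) = k :=
        fun n k => Function.update_self _ _ _
      constructor
      · intro hyp
        obtain ⟨n, hnL, hbody⟩ := hyp
        simp only [FOSat, FOW.impl, e1, e2, e3, e4, e5] at hbody
        obtain ⟨hlt, hall, hφ⟩ := hbody
        have hn : n = v x + 1 := by
          by_contra hne
          have hk : v x + 1 < n := by omega
          have hkL : ((v x + 1 : ℕ) : ℕ∞) < L :=
            lt_trans (by exact_mod_cast hk) hnL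
          rcases hall (v x + 1) hkL with h' | h'
          · exact h' ⟨by omega, hk⟩
          · exact h' trivial
        subst hn
        refine ⟨by exact_mod_cast hnL, ?_⟩
        have := (ih (x+1) σ L (Function.update v (x+1) (v x + 1))
          (by rw [e2]; exact_mod_cast hnL)).mp hφ
        rwa [e2] at this
      · rintro ⟨h1, h2⟩
        refine ⟨v x + 1, by exact_mod_cast h1, ?_⟩
        simp only [FOSat, FOW.impl, e1, e2, e3, e4, e5]
        refine ⟨by omega, ?_, ?_⟩
        · intro k _
          left
          rintro ⟨hk1, hk2⟩
          omega
        · exact (ih (x+1) σ L (Function.update v (x+1) (v x + 1))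
            (by rw [e2]; exact_mod_cast h1)).mpr (by rw [e2]; exact h2)
  | untl _ _ ih1 ih2 =>
      intro x σ L v hv
      have e1 : ∀ n : ℕ, Function.update v (x+1) n x = v x :=
        fun n => Function.update_of_ne (by omega) _ _
      have e2 : ∀ n : ℕ, Function.update v (x+1) n (x+1) = n :=
        fun n => Function.update_self _ _ _
      have e3 : ∀ n k : ℕ,
          Function.update (Function.update v (x+1) n) (x+2) k x = v x := by
        intro n k
        rw [Function.update_of_ne (by omega), e1]
      have e4 : ∀ n k : ℕ,
          Function.update (Function.update v (x+1) n) (x+2) k (x+1) = n := by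
        intro n k
        rw [Function.update_of_ne (by omega), e2]
      have e5 : ∀ n k : ℕ,
          Function.update (Function.update v (x+1) n) (x+2) k (x+2) = k :=
        fun n k => Function.update_self _ _ _
      constructor
      · rintro (hψ | ⟨hφ, hex⟩)
        · exact ⟨v x, le_refl _, hv, (ih2 x σ L v hv).mp hψ, fun k hk1 hk2 => by omega⟩
        · obtain ⟨n, hnL, hbody⟩ := hex
          simp only [FOSat, FOW.impl, e1, e2, e3, e4, e5] at hbody
          obtain ⟨hlt, hψn, hall⟩ := hbody
          refine ⟨n, le_of_lt hlt, hnL, ?_, ?_⟩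
          · have := (ih2 (x+1) σ L (Function.update v (x+1) n)
              (by rw [e2]; exact hnL)).mp hψn
            rwa [e2] at this
          · intro k hk1 hk2
            rcases eq_or_lt_of_le hk1 with heq | hgt
            · rw [← heq]; exact (ih1 x σ L v hv).mp hφ
            · have hkL : (k : ℕ∞) < L := lt_trans (by exact_mod_cast hk2) hnL
              rcases hall k hkL with h' | h'
              · exact absurd ⟨hgt, hk2⟩ h'
              · have := (ih1 (x+2) σ L
                  (Function.update (Function.update v (x+1) n) (x+2) k)
                  (by rw [e5]; exact hkL)).mp h'
                rwa [e5] at this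
      · rintro ⟨j, hij, hjL, hψj, hallk⟩
        rcases eq_or_lt_of_le hij with heq | hgt
        · left
          rw [← heq] at hψj
          exact (ih2 x σ L v hv).mpr hψj
        · right
          refine ⟨(ih1 x σ L v hv).mpr (hallk (v x) (le_refl _) hgt), j, hjL, ?_⟩
          simp only [FOSat, FOW.impl, e1, e2, e3, e4, e5]
          refine ⟨hgt, ?_, ?_⟩
          · exact (ih2 (x+1) σ L (Function.update v (x+1) j)
              (by rw [e2]; exact hjL)).mpr (by rw [e2]; exact hψj)
          · intro k hkL
            by_cases hk : v x < k ∧ k < j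
            · right
              refine (ih1 (x+2) σ L
                (Function.update (Function.update v (x+1) j) (x+2) k)
                (by rw [e5]; exact hkL)).mpr ?_
              rw [e5]
              exact hallk k (le_of_lt hk.1) hk.2
            · left
              intro hcon
              exact hk hcon

end CoSafetyPaper
open CoSafetyPaper in
/-- Every coSafetyLTL\{wX} formula has an equivalent coSafetyFO
formula (with exactly one free variable) over finite words; consequently
`⟦coSafetyLTL\{wX}⟧_fin ⊆ ⟦coSafetyFO⟧_fin`. -/
theorem cosafetyltl_noW_to_cosafetyFO (PL : Type) [Fintype PL] :
    (∀ φ : LTLF PL, CoSafetyLTLnoW φ →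
      ∃ ψ : FOW PL, CoSafetyFO ψ ∧ HasOneFree ψ ∧
        ∀ xs : List (Set PL), xs ≠ [] →
          (FinSat xs φ 0 ↔ FOSat (wordOf xs) (xs.length : ℕ∞) ψ (fun _ => 0)))
    ∧ CoSafetyLTLnoWFin PL ⊆ CoSafetyFOFin PL := by
  have main : ∀ φ : LTLF PL, CoSafetyLTLnoW φ →
      ∃ ψ : FOW PL, CoSafetyFO ψ ∧ HasOneFree ψ ∧
        ∀ xs : List (Set PL), xs ≠ [] →
          (FinSat xs φ 0 ↔ FOSat (wordOf xs) (xs.length : ℕ∞) ψ (fun _ => 0)) := by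
    intro φ hφ
    refine ⟨transFO φ 0, transFO_cosafety hφ 0, ⟨0, transFO_free φ 0⟩, ?_⟩
    intro xs hxs
    have hlen : 0 < xs.length := List.length_pos_iff.mpr hxs
    have hv : (((fun _ : ℕ => 0) 0 : ℕ) : ℕ∞) < (xs.length : ℕ∞) := by
      exact_mod_cast hlen
    exact (transFO_correct hφ 0 (wordOf xs) (xs.length : ℕ∞) (fun _ => 0) hv).symm
  refine ⟨main, ?_⟩
  rintro Lg ⟨φ, hφ, rfl⟩
  obtain ⟨ψ, hco, hone, hiff⟩ := main φ hφ
  refine ⟨ψ, hco, hone, ?_⟩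
  ext xs
  constructor
  · rintro ⟨hne, hsat⟩
    exact ⟨hne, (hiff xs hne).mp hsat⟩
  · rintro ⟨hne, hsat⟩
    exact ⟨hne, (hiff xs hne).mpr hsat⟩
end

section
/- For every coSafetyFO formula φ(x) with exactly one free variable: (i) L_fin(φ(x)) = L_fin(φ(x))·(2^Σ)^*, and (ii) L(φ(x)) = L_fin(φ(x))·(2^Σ)^ω. Consequently ⟦coSafetyFO⟧_fin = {L·(2^Σ)^* : L ∈ ⟦coSafetyFO⟧_fin} and ⟦coSafetyFO⟧ = {L·(2^Σ)^ω : L ∈ ⟦coSafetyFO⟧_fin}. -/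
section CoSafetyAux
open CoSafetyPaper

variable {PL : Type}

private lemma castmax_le {a b : ℕ} {L : ℕ∞} (ha : (a:ℕ∞) ≤ L) (hb : (b:ℕ∞) ≤ L) :
    ((max a b : ℕ):ℕ∞) ≤ L := by
  rcases max_cases a b with ⟨h,_⟩|⟨h,_⟩ <;> rw [h] <;> assumption

private lemma succ_cast_le {n : ℕ} {L : ℕ∞} (h : (n:ℕ∞) < L) : ((n+1:ℕ):ℕ∞) ≤ L := by
  push_cast; exact Order.add_one_le_of_lt h

/-- Bound for the free variables. -/
private def NB (φ : FOW PL) (v : ℕ → ℕ) : ℕ := φ.free.sup (fun x => v x + 1)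

private lemma NB_le {φ : FOW PL} {v : ℕ → ℕ} {L : ℕ∞}
    (hfr : ∀ x ∈ φ.free, (v x : ℕ∞) < L) : ((NB φ v : ℕ):ℕ∞) ≤ L := by
  rcases φ.free.eq_empty_or_nonempty with he | hne
  · simp [NB, he]
  · obtain ⟨x, hx, hfx⟩ := Finset.exists_mem_eq_sup φ.free hne (fun x => v x + 1)
    rw [NB, hfx]; exact succ_cast_le (hfr x hx)

private lemma lt_NB {φ : FOW PL} {v : ℕ → ℕ} {x : ℕ} (hx : x ∈ φ.free) : v x < NB φ v :=
  Nat.lt_of_succ_le (Finset.le_sup (f := fun x => v x + 1) hx)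

private lemma sup_cast_le {s : Finset ℕ} {f : ℕ → ℕ} {L : ℕ∞}
    (h : ∀ x, (f x : ℕ∞) ≤ L) : ((s.sup f : ℕ) : ℕ∞) ≤ L := by
  rcases s.eq_empty_or_nonempty with rfl | hs
  · simp
  · obtain ⟨x, _, hfx⟩ := Finset.exists_mem_eq_sup s hs f
    rw [hfx]; exact h x

/-- Upward monotonicity: satisfaction of a `coSafetyFO` formula transfers to any
longer word agreeing on the relevant prefix. -/
private lemma satMono {φ : FOW PL} (h : CoSafetyFO φ) :
    ∀ (σ σ' : ℕ → Set PL) (L L' : ℕ∞) (v : ℕ → ℕ), L ≤ L' →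
    (∀ n : ℕ, (n:ℕ∞) < L → σ n = σ' n) →
    (∀ x ∈ φ.free, (v x : ℕ∞) < L) →
    FOSat σ L φ v → FOSat σ' L' φ v := by
  induction h with
  | lt x y => intro σ σ' L L' v _ _ _ hs; exact hs
  | eq x y => intro σ σ' L L' v _ _ _ hs; exact hs
  | ne x y => intro σ σ' L L' v _ _ _ hs; exact hs
  | pred p x =>
      intro σ σ' L L' v _ hag hfr hs
      have hx := hfr x (by simp [FOW.free])
      simp only [FOSat] at hs ⊢
      rwa [← hag _ hx]
  | npred p x =>
      intro σ σ' L L' v _ hag hfr hs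
      have hx := hfr x (by simp [FOW.free])
      simp only [FOSat] at hs ⊢
      rwa [← hag _ hx]
  | disj hφ hψ ihφ ihψ =>
      intro σ σ' L L' v hLL hag hfr hs
      simp only [FOSat] at hs ⊢
      rcases hs with hs | hs
      · exact Or.inl (ihφ σ σ' L L' v hLL hag
          (fun x hx => hfr x (by simp [FOW.free, hx])) hs)
      · exact Or.inr (ihψ σ σ' L L' v hLL hag
          (fun x hx => hfr x (by simp [FOW.free, hx])) hs)
  | conj hφ hψ ihφ ihψ =>
      intro σ σ' L L' v hLL hag hfr hs
      simp only [FOSat] at hs ⊢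
      exact ⟨ihφ σ σ' L L' v hLL hag (fun x hx => hfr x (by simp [FOW.free, hx])) hs.1,
        ihψ σ σ' L L' v hLL hag (fun x hx => hfr x (by simp [FOW.free, hx])) hs.2⟩
  | @ex x y φ hφ ih =>
      intro σ σ' L L' v hLL hag hfr hs
      simp only [FOSat] at hs ⊢
      obtain ⟨n, hnL, hg, hsφ⟩ := hs
      refine ⟨n, lt_of_lt_of_le hnL hLL, hg, ?_⟩
      refine ih σ σ' L L' _ hLL hag ?_ hsφ
      intro z hz
      rcases eq_or_ne z y with rfl | hzy
      · simpa using hnL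
      · rw [Function.update_of_ne hzy]
        exact hfr z (by simp [FOW.free, Finset.mem_erase, hzy, hz])
  | @all x y z φ hφ ih =>
      intro σ σ' L L' v hLL hag hfr hs
      simp only [FOSat, FOW.impl] at hs ⊢
      intro n hnL'
      by_cases hg : Function.update v y n x < Function.update v y n y ∧
          Function.update v y n y < Function.update v y n z
      · have hzy : z ≠ y := by
          rintro rfl; exact absurd hg.2 (lt_irrefl _)
        have hnvz : n < v z := by
          have := hg.2
          rwa [Function.update_self, Function.update_of_ne hzy] at this
        have hvzL : (v z : ℕ∞) < L :=
          hfr z (by simp [FOW.free, FOW.impl, Finset.mem_erase, hzy])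
        have hnL : (n:ℕ∞) < L := lt_trans (by exact_mod_cast hnvz) hvzL
        rcases hs n hnL with hng | hsφ
        · exact absurd hg hng
        · refine Or.inr (ih σ σ' L L' _ hLL hag ?_ hsφ)
          intro w hw
          rcases eq_or_ne w y with rfl | hwy
          · simpa using hnL
          · rw [Function.update_of_ne hwy]
            exact hfr w (by simp [FOW.free, FOW.impl, Finset.mem_erase, hwy, hw])
      · exact Or.inl hg

/-- Downward: a satisfied `coSafetyFO` formula is satisfied on some finite prefix. -/
private lemma satFin {φ : FOW PL} (h : CoSafetyFO φ) :
    ∀ (σ : ℕ → Set PL) (L : ℕ∞) (v : ℕ → ℕ),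
    (∀ x ∈ φ.free, (v x : ℕ∞) < L) →
    FOSat σ L φ v →
    ∃ N : ℕ, (N:ℕ∞) ≤ L ∧ (∀ x ∈ φ.free, v x < N) ∧ FOSat σ (N:ℕ∞) φ v := by
  induction h with
  | lt x y => intro σ L v hfr hs; exact ⟨NB _ v, NB_le hfr, fun x hx => lt_NB hx, hs⟩
  | eq x y => intro σ L v hfr hs; exact ⟨NB _ v, NB_le hfr, fun x hx => lt_NB hx, hs⟩
  | ne x y => intro σ L v hfr hs; exact ⟨NB _ v, NB_le hfr, fun x hx => lt_NB hx, hs⟩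
  | pred p x => intro σ L v hfr hs; exact ⟨NB _ v, NB_le hfr, fun x hx => lt_NB hx, hs⟩
  | npred p x => intro σ L v hfr hs; exact ⟨NB _ v, NB_le hfr, fun x hx => lt_NB hx, hs⟩
  | @disj φ ψ hφ hψ ihφ ihψ =>
      intro σ L v hfr hs
      simp only [FOSat] at hs
      rcases hs with hs | hs
      · obtain ⟨N₁, hN₁L, hN₁fr, hN₁s⟩ := ihφ σ L v
          (fun x hx => hfr x (by simp [FOW.free, hx])) hs
        refine ⟨max N₁ (NB (.disj φ ψ) v), castmax_le hN₁L (NB_le hfr),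
          fun x hx => lt_of_lt_of_le (lt_NB hx) (le_max_right _ _), ?_⟩
        simp only [FOSat]
        exact Or.inl (satMono hφ σ σ N₁ _ v (by exact_mod_cast le_max_left _ _)
          (fun _ _ => rfl) (fun x hx => by exact_mod_cast hN₁fr x hx) hN₁s)
      · obtain ⟨N₁, hN₁L, hN₁fr, hN₁s⟩ := ihψ σ L v
          (fun x hx => hfr x (by simp [FOW.free, hx])) hs
        refine ⟨max N₁ (NB (.disj φ ψ) v), castmax_le hN₁L (NB_le hfr),
          fun x hx => lt_of_lt_of_le (lt_NB hx) (le_max_right _ _), ?_⟩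
        simp only [FOSat]
        exact Or.inr (satMono hψ σ σ N₁ _ v (by exact_mod_cast le_max_left _ _)
          (fun _ _ => rfl) (fun x hx => by exact_mod_cast hN₁fr x hx) hN₁s)
  | @conj φ ψ hφ hψ ihφ ihψ =>
      intro σ L v hfr hs
      simp only [FOSat] at hs
      obtain ⟨N₁, hN₁L, hN₁fr, hN₁s⟩ := ihφ σ L v
        (fun x hx => hfr x (by simp [FOW.free, hx])) hs.1
      obtain ⟨N₂, hN₂L, hN₂fr, hN₂s⟩ := ihψ σ L v
        (fun x hx => hfr x (by simp [FOW.free, hx])) hs.2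
      refine ⟨max N₁ N₂, castmax_le hN₁L hN₂L, ?_, ?_⟩
      · intro x hx
        simp only [FOW.free, Finset.mem_union] at hx
        rcases hx with hx | hx
        · exact lt_of_lt_of_le (hN₁fr x hx) (le_max_left _ _)
        · exact lt_of_lt_of_le (hN₂fr x hx) (le_max_right _ _)
      · simp only [FOSat]
        exact ⟨satMono hφ σ σ N₁ _ v (by exact_mod_cast le_max_left _ _)
            (fun _ _ => rfl) (fun x hx => by exact_mod_cast hN₁fr x hx) hN₁s,
          satMono hψ σ σ N₂ _ v (by exact_mod_cast le_max_right _ _)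
            (fun _ _ => rfl) (fun x hx => by exact_mod_cast hN₂fr x hx) hN₂s⟩
  | @ex x y φ hφ ih =>
      intro σ L v hfr hs
      simp only [FOSat] at hs
      obtain ⟨n, hnL, hg, hsφ⟩ := hs
      have hxy : x ≠ y := by
        rintro rfl; exact absurd hg (lt_irrefl _)
      have hfr' : ∀ z ∈ φ.free, ((Function.update v y n z : ℕ):ℕ∞) < L := by
        intro z hz
        rcases eq_or_ne z y with rfl | hzy
        · simpa using hnL
        · rw [Function.update_of_ne hzy]
          exact hfr z (by simp [FOW.free, Finset.mem_erase, hzy, hz])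
      obtain ⟨N₁, hN₁L, hN₁fr, hN₁s⟩ := ih σ L _ hfr' hsφ
      refine ⟨max N₁ (n+1), castmax_le hN₁L (succ_cast_le hnL), ?_, ?_⟩
      · intro w hw
        simp only [FOW.free, Finset.mem_erase, Finset.mem_union, Finset.mem_insert,
          Finset.mem_singleton] at hw
        obtain ⟨hwy, hw⟩ := hw
        rcases hw with (rfl | rfl) | hw
        · have hvx : v w < n := by
            have := hg
            rwa [Function.update_self, Function.update_of_ne hxy] at this
          exact lt_of_lt_of_le (Nat.lt_succ_of_lt hvx) (le_max_right _ _)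
        · exact absurd rfl hwy
        · have := hN₁fr w hw
          rw [Function.update_of_ne hwy] at this
          exact lt_of_lt_of_le this (le_max_left _ _)
      · simp only [FOSat]
        refine ⟨n, by exact_mod_cast lt_of_lt_of_le (Nat.lt_succ_self n) (le_max_right _ _),
          hg, ?_⟩
        exact satMono hφ σ σ N₁ _ _ (by exact_mod_cast le_max_left _ _)
          (fun _ _ => rfl) (fun w hw => by exact_mod_cast hN₁fr w hw) hN₁s
  | @all x y z φ hφ ih =>
      intro σ L v hfr hs
      simp only [FOSat, FOW.impl] at hs
      have key : ∀ n : ℕ, ∃ N : ℕ, (N:ℕ∞) ≤ L ∧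
          ((Function.update v y n x < Function.update v y n y ∧
            Function.update v y n y < Function.update v y n z) →
           (∀ w ∈ φ.free, Function.update v y n w < N) ∧
            FOSat σ (N:ℕ∞) φ (Function.update v y n)) := by
        intro n
        by_cases hg : Function.update v y n x < Function.update v y n y ∧
            Function.update v y n y < Function.update v y n z
        · have hzy : z ≠ y := by
            rintro rfl; exact absurd hg.2 (lt_irrefl _)
          have hnvz : n < v z := by
            have := hg.2
            rwa [Function.update_self, Function.update_of_ne hzy] at this
          have hvzL : (v z : ℕ∞) < L :=
            hfr z (by simp [FOW.free, FOW.impl, Finset.mem_erase, hzy])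
          have hnL : (n:ℕ∞) < L := lt_trans (by exact_mod_cast hnvz) hvzL
          rcases hs n hnL with hng | hsφ
          · exact absurd hg hng
          · have hfr' : ∀ w ∈ φ.free, ((Function.update v y n w : ℕ):ℕ∞) < L := by
              intro w hw
              rcases eq_or_ne w y with rfl | hwy
              · simpa using hnL
              · rw [Function.update_of_ne hwy]
                exact hfr w (by simp [FOW.free, FOW.impl, Finset.mem_erase, hwy, hw])
            obtain ⟨N₁, h1, h2, h3⟩ := ih σ L _ hfr' hsφ
            exact ⟨N₁, h1, fun _ => ⟨h2, h3⟩⟩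
        · exact ⟨0, by simp, fun h => absurd h hg⟩
      choose f hfL hfsat using key
      set φ₀ : FOW PL := .all y (FOW.impl (.conj (.lt x y) (.lt y z)) φ) with hφ₀
      refine ⟨max (NB φ₀ v) ((Finset.range (v z)).sup f),
        castmax_le (NB_le hfr) (sup_cast_le hfL),
        fun w hw => lt_of_lt_of_le (lt_NB hw) (le_max_left _ _), ?_⟩
      simp only [hφ₀, FOSat, FOW.impl]
      intro n hnN
      by_cases hg : Function.update v y n x < Function.update v y n y ∧
          Function.update v y n y < Function.update v y n z
      · have hzy : z ≠ y := by
          rintro rfl; exact absurd hg.2 (lt_irrefl _)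
        have hnvz : n < v z := by
          have := hg.2
          rwa [Function.update_self, Function.update_of_ne hzy] at this
        have hle : f n ≤ (Finset.range (v z)).sup f :=
          Finset.le_sup (Finset.mem_range.2 hnvz)
        have hfn := hfsat n hg
        refine Or.inr (satMono hφ σ σ (f n) _ _
          (by exact_mod_cast le_trans hle (le_max_right _ _))
          (fun _ _ => rfl) (fun w hw => by exact_mod_cast hfn.1 w hw) hfn.2)
      · exact Or.inl hg

end CoSafetyAux
open CoSafetyPaper in
/-- For every coSafetyFO formula φ(x) with exactly one free
variable, `L_fin(φ(x)) = L_fin(φ(x))·(2^Σ)^*` and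
`L(φ(x)) = L_fin(φ(x))·(2^Σ)^ω`; consequently the corresponding identities
hold at the level of the classes of definable languages. -/
theorem cosafetyFO_insensitive (PL : Type) [Fintype PL] :
    (∀ φ : FOW PL, CoSafetyFO φ → HasOneFree φ →
      LfinFO φ = catFin (LfinFO φ) ∧ LinfFO φ = catInf (LfinFO φ))
    ∧ CoSafetyFOFin PL = catFin '' CoSafetyFOFin PL
    ∧ CoSafetyFOInf PL = catInf '' CoSafetyFOFin PL := by
  have main : ∀ φ : FOW PL, CoSafetyFO φ → HasOneFree φ →
      LfinFO φ = catFin (LfinFO φ) ∧ LinfFO φ = catInf (LfinFO φ) := by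
    intro φ hco hone
    obtain ⟨x₀, hx₀⟩ := hone
    constructor
    · ext w
      constructor
      · intro hw
        exact ⟨w, hw, [], by simp⟩
      · rintro ⟨u, ⟨hune, husat⟩, v, rfl⟩
        refine ⟨by simp [hune], ?_⟩
        refine satMono hco (wordOf u) (wordOf (u ++ v)) u.length (u ++ v).length _
          (by simp) ?_ ?_ husat
        · intro n hn
          have hn' : n < u.length := by exact_mod_cast hn
          simp [wordOf, List.getD_eq_getElem?_getD, List.getElem?_append, hn']
        · intro y _
          have : 0 < u.length := List.length_pos_iff.2 hune
          exact_mod_cast this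
    · ext σ
      constructor
      · intro hσ
        have hfr : ∀ y ∈ φ.free, (((fun _ => 0) y : ℕ) : ℕ∞) < (⊤ : ℕ∞) := by
          intro y _
          exact (by simp : ((0:ℕ):ℕ∞) < ⊤)
        obtain ⟨N, _, hNfr, hNs⟩ := satFin hco σ ⊤ (fun _ => 0) hfr hσ
        have hNpos : 0 < N := hNfr x₀ (by simp [hx₀])
        set u : List (Set PL) := (List.range N).map σ with hu
        have hlen : u.length = N := by simp [hu]
        have hune : u ≠ [] := by
          intro h
          rw [h] at hlen
          simp at hlen
          omega
        have hag : ∀ n : ℕ, (n:ℕ∞) < (N:ℕ∞) → σ n = wordOf u n := by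
          intro n hn
          have hn' : n < N := by exact_mod_cast hn
          simp [wordOf, hu, List.getD_eq_getElem?_getD, List.getElem?_map,
            List.getElem?_range hn']
        have husat : FOSat (wordOf u) (N:ℕ∞) φ (fun _ => 0) :=
          satMono hco σ (wordOf u) N N _ le_rfl hag
            (fun y _ => by exact_mod_cast hNpos) hNs
        refine ⟨u, ⟨hune, by rw [hlen]; exact husat⟩, fun k => σ (k + N), ?_⟩
        funext n
        by_cases hn : n < u.length
        · simp only [listConc]
          rw [if_pos hn]
          exact hag n (by rw [← hlen]; exact_mod_cast hn)
        · simp only [listConc]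
          rw [if_neg hn]
          have h1 : n - u.length + N = n := by
            rw [hlen] at hn ⊢
            omega
          rw [h1]

      · rintro ⟨u, ⟨hune, husat⟩, σ', rfl⟩
        show FOSat (listConc u σ') ⊤ φ (fun _ => 0)
        refine satMono hco (wordOf u) (listConc u σ') u.length ⊤ _ le_top ?_ ?_ husat
        · intro n hn
          have hn' : n < u.length := by exact_mod_cast hn
          simp [listConc, hn']
        · intro y _
          have : 0 < u.length := List.length_pos_iff.2 hune
          exact_mod_cast this
  refine ⟨main, ?_, ?_⟩
  · ext Lg
    constructor
    · rintro ⟨φ, hco, hone, rfl⟩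
      exact ⟨LfinFO φ, ⟨φ, hco, hone, rfl⟩, ((main φ hco hone).1).symm⟩
    · rintro ⟨Lg', ⟨φ, hco, hone, rfl⟩, rfl⟩
      exact ⟨φ, hco, hone, ((main φ hco hone).1).symm⟩
  · ext Lg
    constructor
    · rintro ⟨φ, hco, hone, rfl⟩
      exact ⟨LfinFO φ, ⟨φ, hco, hone, rfl⟩, ((main φ hco hone).2).symm⟩
    · rintro ⟨Lg', ⟨φ, hco, hone, rfl⟩, rfl⟩
      exact ⟨φ, hco, hone, ((main φ hco hone).2).symm⟩
end

section
/- For every FO formula φ(x) with exactly one free variable there exists a coSafetyFO formula φ'(x) with exactly one free variable such that L_fin(φ'(x)) = L_fin(φ(x))·(2^Σ)^*. -/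
namespace CoSafetyAux
open CoSafetyPaper

/-- `polar true P = P`, `polar false P = ¬P`. -/
def polar : Bool → Prop → Prop
  | true, P => P
  | false, P => ¬P

lemma polar_not (b : Bool) (P : Prop) : polar (!b) P ↔ polar b (¬P) := by
  cases b <;> simp [polar]

variable {PL : Type}

/-- Relativization transform: `T x0 B φ b ρ c` is a coSafetyFO formula equivalent to
`φ` (if `b = true`) resp. `¬φ` (if `b = false`) with atoms renamed by `ρ`,
quantifiers relativized to positions `≤ v B`, fresh variables from `c` on,
where `x0` is a variable denoting position `0`. -/
def T (x0 B : ℕ) : FOW PL → Bool → (ℕ → ℕ) → ℕ → FOW PL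
  | .lt a b, true, ρ, _ => .lt (ρ a) (ρ b)
  | .lt a b, false, ρ, _ => .disj (.lt (ρ b) (ρ a)) (.eq (ρ a) (ρ b))
  | .eq a b, true, ρ, _ => .eq (ρ a) (ρ b)
  | .eq a b, false, ρ, _ => .not (.eq (ρ a) (ρ b))
  | .pred p a, true, ρ, _ => .pred p (ρ a)
  | .pred p a, false, ρ, _ => .not (.pred p (ρ a))
  | .not ψ, b, ρ, c => T x0 B ψ (!b) ρ c
  | .disj ψ χ, true, ρ, c => .disj (T x0 B ψ true ρ c) (T x0 B χ true ρ c)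
  | .disj ψ χ, false, ρ, c => .conj (T x0 B ψ false ρ c) (T x0 B χ false ρ c)
  | .conj ψ χ, true, ρ, c => .conj (T x0 B ψ true ρ c) (T x0 B χ true ρ c)
  | .conj ψ χ, false, ρ, c => .disj (T x0 B ψ false ρ c) (T x0 B χ false ρ c)
  | .ex y ψ, true, ρ, c =>
      .disj (T x0 B ψ true (Function.update ρ y x0) c)
        (.ex c (.conj (.lt x0 c) (.conj (.disj (.lt c B) (.eq c B))
          (T x0 B ψ true (Function.update ρ y c) (c+1)))))
  | .ex y ψ, false, ρ, c =>
      .conj (T x0 B ψ false (Function.update ρ y x0) c)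
        (.conj (.all c (FOW.impl (.conj (.lt x0 c) (.lt c B))
            (T x0 B ψ false (Function.update ρ y c) (c+1))))
          (T x0 B ψ false (Function.update ρ y B) c))
  | .all y ψ, true, ρ, c =>
      .conj (T x0 B ψ true (Function.update ρ y x0) c)
        (.conj (.all c (FOW.impl (.conj (.lt x0 c) (.lt c B))
            (T x0 B ψ true (Function.update ρ y c) (c+1))))
          (T x0 B ψ true (Function.update ρ y B) c))
  | .all y ψ, false, ρ, c =>
      .disj (T x0 B ψ false (Function.update ρ y x0) c)
        (.ex c (.conj (.lt x0 c) (.conj (.disj (.lt c B) (.eq c B))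
          (T x0 B ψ false (Function.update ρ y c) (c+1)))))

/-- `T` always lands in the coSafetyFO fragment. -/
lemma T_cosafety (x0 B : ℕ) (φ : FOW PL) :
    ∀ (b : Bool) (ρ : ℕ → ℕ) (c : ℕ), CoSafetyFO (T x0 B φ b ρ c) := by
  induction φ with
  | lt a b =>
    intro b ρ c
    cases b
    · exact CoSafetyFO.disj (CoSafetyFO.lt _ _) (CoSafetyFO.eq _ _)
    · exact CoSafetyFO.lt _ _
  | eq a b =>
    intro b ρ c
    cases b
    · exact CoSafetyFO.ne _ _
    · exact CoSafetyFO.eq _ _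
  | pred p a =>
    intro b ρ c
    cases b
    · exact CoSafetyFO.npred _ _
    · exact CoSafetyFO.pred _ _
  | not ψ ih => intro b ρ c; exact ih (!b) ρ c
  | disj ψ χ ih1 ih2 =>
    intro b ρ c
    cases b
    · exact CoSafetyFO.conj (ih1 _ _ _) (ih2 _ _ _)
    · exact CoSafetyFO.disj (ih1 _ _ _) (ih2 _ _ _)
  | conj ψ χ ih1 ih2 =>
    intro b ρ c
    cases b
    · exact CoSafetyFO.disj (ih1 _ _ _) (ih2 _ _ _)
    · exact CoSafetyFO.conj (ih1 _ _ _) (ih2 _ _ _)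
  | ex y ψ ih =>
    intro b ρ c
    cases b
    · exact CoSafetyFO.conj (ih _ _ _) (CoSafetyFO.conj
        (CoSafetyFO.all x0 c B (ih _ _ _)) (ih _ _ _))
    · exact CoSafetyFO.disj (ih _ _ _) (CoSafetyFO.ex x0 c
        (CoSafetyFO.conj (CoSafetyFO.disj (CoSafetyFO.lt _ _) (CoSafetyFO.eq _ _)) (ih _ _ _)))
  | all y ψ ih =>
    intro b ρ c
    cases b
    · exact CoSafetyFO.disj (ih _ _ _) (CoSafetyFO.ex x0 c
        (CoSafetyFO.conj (CoSafetyFO.disj (CoSafetyFO.lt _ _) (CoSafetyFO.eq _ _)) (ih _ _ _)))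
    · exact CoSafetyFO.conj (ih _ _ _) (CoSafetyFO.conj
        (CoSafetyFO.all x0 c B (ih _ _ _)) (ih _ _ _))

/-- Free variables of `T`. -/
lemma T_free (x0 B : ℕ) (φ : FOW PL) :
    ∀ (b : Bool) (ρ : ℕ → ℕ) (c : ℕ), x0 < c → B < c →
      ∀ m ∈ (T x0 B φ b ρ c).free, m = x0 ∨ m = B ∨ ∃ z ∈ φ.free, m = ρ z := by
  induction φ with
  | lt a b =>
    intro b ρ c hx hB m hm
    refine Or.inr (Or.inr ?_)
    cases b <;>
      simp only [T, FOW.free, Finset.mem_union, Finset.mem_insert, Finset.mem_singleton]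
        at hm ⊢ <;> aesop
  | eq a b =>
    intro b ρ c hx hB m hm
    refine Or.inr (Or.inr ?_)
    cases b <;>
      simp only [T, FOW.free, Finset.mem_union, Finset.mem_insert, Finset.mem_singleton]
        at hm ⊢ <;> aesop
  | pred p a =>
    intro b ρ c hx hB m hm
    refine Or.inr (Or.inr ?_)
    cases b <;>
      simp only [T, FOW.free, Finset.mem_union, Finset.mem_insert, Finset.mem_singleton]
        at hm ⊢ <;> aesop
  | not ψ ih =>
    intro b ρ c hx hB m hm
    exact ih (!b) ρ c hx hB m hm
  | disj ψ χ ih1 ih2 =>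
    intro b ρ c hx hB m hm
    have hm' : m ∈ (T x0 B ψ b ρ c).free ∨ m ∈ (T x0 B χ b ρ c).free := by
      cases b <;> simp only [T, FOW.free, Finset.mem_union] at hm <;> tauto
    rcases hm' with h | h
    · rcases ih1 _ ρ c hx hB m h with h' | h' | ⟨z, hz, h'⟩
      · exact Or.inl h'
      · exact Or.inr (Or.inl h')
      · exact Or.inr (Or.inr ⟨z, by simpa [FOW.free] using Or.inl hz, h'⟩)
    · rcases ih2 _ ρ c hx hB m h with h' | h' | ⟨z, hz, h'⟩
      · exact Or.inl h'
      · exact Or.inr (Or.inl h')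
      · exact Or.inr (Or.inr ⟨z, by simpa [FOW.free] using Or.inr hz, h'⟩)
  | conj ψ χ ih1 ih2 =>
    intro b ρ c hx hB m hm
    have hm' : m ∈ (T x0 B ψ b ρ c).free ∨ m ∈ (T x0 B χ b ρ c).free := by
      cases b <;> simp only [T, FOW.free, Finset.mem_union] at hm <;> tauto
    rcases hm' with h | h
    · rcases ih1 _ ρ c hx hB m h with h' | h' | ⟨z, hz, h'⟩
      · exact Or.inl h'
      · exact Or.inr (Or.inl h')
      · exact Or.inr (Or.inr ⟨z, by simpa [FOW.free] using Or.inl hz, h'⟩)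
    · rcases ih2 _ ρ c hx hB m h with h' | h' | ⟨z, hz, h'⟩
      · exact Or.inl h'
      · exact Or.inr (Or.inl h')
      · exact Or.inr (Or.inr ⟨z, by simpa [FOW.free] using Or.inr hz, h'⟩)
  | ex y ψ ih =>
    intro b ρ c hx hB m hm
    have key : ∀ (b' : Bool) (t : ℕ), t = x0 ∨ t = B →
        m ∈ (T x0 B ψ b' (Function.update ρ y t) c).free →
        m = x0 ∨ m = B ∨ ∃ z ∈ (FOW.ex y ψ).free, m = ρ z := by
      intro b' t ht hmem
      rcases ih b' (Function.update ρ y t) c hx hB m hmem with h' | h' | ⟨z, hz, h'⟩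
      · exact Or.inl h'
      · exact Or.inr (Or.inl h')
      · rcases eq_or_ne z y with rfl | hzy
        · rw [Function.update_self] at h'
          rcases ht with rfl | rfl
          · exact Or.inl h'
          · exact Or.inr (Or.inl h')
        · rw [Function.update_of_ne hzy] at h'
          exact Or.inr (Or.inr ⟨z, Finset.mem_erase.mpr ⟨hzy, hz⟩, h'⟩)
    have keyc : ∀ (b' : Bool), m ≠ c →
        m ∈ (T x0 B ψ b' (Function.update ρ y c) (c+1)).free →
        m = x0 ∨ m = B ∨ ∃ z ∈ (FOW.ex y ψ).free, m = ρ z := by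
      intro b' hmc hmem
      rcases ih b' (Function.update ρ y c) (c+1) (lt_trans hx (Nat.lt_succ_self c))
        (lt_trans hB (Nat.lt_succ_self c)) m hmem with h' | h' | ⟨z, hz, h'⟩
      · exact Or.inl h'
      · exact Or.inr (Or.inl h')
      · rcases eq_or_ne z y with rfl | hzy
        · rw [Function.update_self] at h'; exact absurd h' hmc
        · rw [Function.update_of_ne hzy] at h'
          exact Or.inr (Or.inr ⟨z, Finset.mem_erase.mpr ⟨hzy, hz⟩, h'⟩)
    cases b
    · -- false : conj shape
      simp only [T, FOW.free, FOW.impl, Finset.mem_union, Finset.mem_erase,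
        Finset.mem_insert, Finset.mem_singleton] at hm
      have hm' : m ∈ (T x0 B ψ false (Function.update ρ y x0) c).free ∨
          (m ≠ c ∧ (m = x0 ∨ m = c ∨ m = B ∨
            m ∈ (T x0 B ψ false (Function.update ρ y c) (c+1)).free)) ∨
          m ∈ (T x0 B ψ false (Function.update ρ y B) c).free := by tauto
      rcases hm' with h | ⟨hmc, (rfl | rfl | rfl | h)⟩ | h
      · exact key false x0 (Or.inl rfl) h
      · exact Or.inl rfl
      · exact absurd rfl hmc
      · exact Or.inr (Or.inl rfl)
      · exact keyc false hmc h
      · exact key false B (Or.inr rfl) h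
    · -- true : disj shape
      simp only [T, FOW.free, Finset.mem_union, Finset.mem_erase,
        Finset.mem_insert, Finset.mem_singleton] at hm
      have hm' : m ∈ (T x0 B ψ true (Function.update ρ y x0) c).free ∨
          (m ≠ c ∧ (m = x0 ∨ m = c ∨ m = B ∨
            m ∈ (T x0 B ψ true (Function.update ρ y c) (c+1)).free)) := by tauto
      rcases hm' with h | ⟨hmc, (rfl | rfl | rfl | h)⟩
      · exact key true x0 (Or.inl rfl) h
      · exact Or.inl rfl
      · exact absurd rfl hmc
      · exact Or.inr (Or.inl rfl)
      · exact keyc true hmc h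
  | all y ψ ih =>
    intro b ρ c hx hB m hm
    have key : ∀ (b' : Bool) (t : ℕ), t = x0 ∨ t = B →
        m ∈ (T x0 B ψ b' (Function.update ρ y t) c).free →
        m = x0 ∨ m = B ∨ ∃ z ∈ (FOW.all y ψ).free, m = ρ z := by
      intro b' t ht hmem
      rcases ih b' (Function.update ρ y t) c hx hB m hmem with h' | h' | ⟨z, hz, h'⟩
      · exact Or.inl h'
      · exact Or.inr (Or.inl h')
      · rcases eq_or_ne z y with rfl | hzy
        · rw [Function.update_self] at h'
          rcases ht with rfl | rfl
          · exact Or.inl h'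
          · exact Or.inr (Or.inl h')
        · rw [Function.update_of_ne hzy] at h'
          exact Or.inr (Or.inr ⟨z, Finset.mem_erase.mpr ⟨hzy, hz⟩, h'⟩)
    have keyc : ∀ (b' : Bool), m ≠ c →
        m ∈ (T x0 B ψ b' (Function.update ρ y c) (c+1)).free →
        m = x0 ∨ m = B ∨ ∃ z ∈ (FOW.all y ψ).free, m = ρ z := by
      intro b' hmc hmem
      rcases ih b' (Function.update ρ y c) (c+1) (lt_trans hx (Nat.lt_succ_self c))
        (lt_trans hB (Nat.lt_succ_self c)) m hmem with h' | h' | ⟨z, hz, h'⟩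
      · exact Or.inl h'
      · exact Or.inr (Or.inl h')
      · rcases eq_or_ne z y with rfl | hzy
        · rw [Function.update_self] at h'; exact absurd h' hmc
        · rw [Function.update_of_ne hzy] at h'
          exact Or.inr (Or.inr ⟨z, Finset.mem_erase.mpr ⟨hzy, hz⟩, h'⟩)
    cases b
    · -- false : disj shape
      simp only [T, FOW.free, Finset.mem_union, Finset.mem_erase,
        Finset.mem_insert, Finset.mem_singleton] at hm
      have hm' : m ∈ (T x0 B ψ false (Function.update ρ y x0) c).free ∨
          (m ≠ c ∧ (m = x0 ∨ m = c ∨ m = B ∨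
            m ∈ (T x0 B ψ false (Function.update ρ y c) (c+1)).free)) := by tauto
      rcases hm' with h | ⟨hmc, (rfl | rfl | rfl | h)⟩
      · exact key false x0 (Or.inl rfl) h
      · exact Or.inl rfl
      · exact absurd rfl hmc
      · exact Or.inr (Or.inl rfl)
      · exact keyc false hmc h
    · -- true : conj shape
      simp only [T, FOW.free, FOW.impl, Finset.mem_union, Finset.mem_erase,
        Finset.mem_insert, Finset.mem_singleton] at hm
      have hm' : m ∈ (T x0 B ψ true (Function.update ρ y x0) c).free ∨
          (m ≠ c ∧ (m = x0 ∨ m = c ∨ m = B ∨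
            m ∈ (T x0 B ψ true (Function.update ρ y c) (c+1)).free)) ∨
          m ∈ (T x0 B ψ true (Function.update ρ y B) c).free := by tauto
      rcases hm' with h | ⟨hmc, (rfl | rfl | rfl | h)⟩ | h
      · exact key true x0 (Or.inl rfl) h
      · exact Or.inl rfl
      · exact absurd rfl hmc
      · exact Or.inr (Or.inl rfl)
      · exact keyc true hmc h
      · exact key true B (Or.inr rfl) h

lemma wordOf_take (xs : List (Set PL)) (k n : ℕ) (h : n < k) :
    wordOf (xs.take k) n = wordOf xs n := by
  simp [wordOf, List.getD, List.getElem?_take, h]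

lemma wordOf_append (u v : List (Set PL)) (n : ℕ) (h : n < u.length) :
    wordOf (u ++ v) n = wordOf u n := by
  simp [wordOf, List.getD, List.getElem?_append, h]

/-- Satisfaction only depends on the letters at positions `< L` and at the
positions of the free variables. -/
lemma FOSat_congr (σ₁ σ₂ : ℕ → Set PL) (L : ℕ∞)
    (hσ : ∀ n : ℕ, (n : ℕ∞) < L → σ₁ n = σ₂ n) (φ : FOW PL) :
    ∀ v : ℕ → ℕ, (∀ z ∈ φ.free, σ₁ (v z) = σ₂ (v z)) →
      (FOSat σ₁ L φ v ↔ FOSat σ₂ L φ v) := by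
  induction φ with
  | lt a b => intro v _; simp [FOSat]
  | eq a b => intro v _; simp [FOSat]
  | pred p a =>
    intro v hv
    have := hv a (by simp [FOW.free])
    simp [FOSat, this]
  | not ψ ih =>
    intro v hv
    simp only [FOSat]
    rw [ih v hv]
  | disj ψ χ ih1 ih2 =>
    intro v hv
    simp only [FOSat]
    rw [ih1 v (fun z hz => hv z (by simp [FOW.free, hz])),
        ih2 v (fun z hz => hv z (by simp [FOW.free, hz]))]
  | conj ψ χ ih1 ih2 =>
    intro v hv
    simp only [FOSat]
    rw [ih1 v (fun z hz => hv z (by simp [FOW.free, hz])),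
        ih2 v (fun z hz => hv z (by simp [FOW.free, hz]))]
  | ex y ψ ih =>
    intro v hv
    have hv' : ∀ n : ℕ, (n : ℕ∞) < L → ∀ z ∈ ψ.free,
        σ₁ (Function.update v y n z) = σ₂ (Function.update v y n z) := by
      intro n hn z hz
      rcases eq_or_ne z y with rfl | hzy
      · rw [Function.update_self]; exact hσ n hn
      · rw [Function.update_of_ne hzy]; exact hv z (Finset.mem_erase.mpr ⟨hzy, hz⟩)
    simp only [FOSat]
    constructor
    · rintro ⟨n, hn, hs⟩; exact ⟨n, hn, (ih _ (hv' n hn)).mp hs⟩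
    · rintro ⟨n, hn, hs⟩; exact ⟨n, hn, (ih _ (hv' n hn)).mpr hs⟩
  | all y ψ ih =>
    intro v hv
    have hv' : ∀ n : ℕ, (n : ℕ∞) < L → ∀ z ∈ ψ.free,
        σ₁ (Function.update v y n z) = σ₂ (Function.update v y n z) := by
      intro n hn z hz
      rcases eq_or_ne z y with rfl | hzy
      · rw [Function.update_self]; exact hσ n hn
      · rw [Function.update_of_ne hzy]; exact hv z (Finset.mem_erase.mpr ⟨hzy, hz⟩)
    simp only [FOSat]
    constructor
    · intro h n hn; exact (ih _ (hv' n hn)).mp (h n hn)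
    · intro h n hn; exact (ih _ (hv' n hn)).mpr (h n hn)

section Shapes

variable (x0 B : ℕ) (σ σ' : ℕ → Set PL) (L : ℕ∞) (w : ℕ)

/-- Semantics of the relativized strong-existential shape. -/
lemma disj_shape (hwL : (w : ℕ∞) < L) (ψ : FOW PL) (y : ℕ) (b : Bool)
    (ih : ∀ (b : Bool) (ρ : ℕ → ℕ) (c : ℕ) (v u : ℕ → ℕ),
      x0 < c → B < c → (∀ z ∈ ψ.free, ρ z < c) → v x0 = 0 → v B = w →
      (∀ z ∈ ψ.free, v (ρ z) = u z) → (∀ z ∈ ψ.free, u z ≤ w) →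
      (FOSat σ L (T x0 B ψ b ρ c) v ↔ polar b (FOSat σ' ((w + 1 : ℕ) : ℕ∞) ψ u)))
    (ρ : ℕ → ℕ) (c : ℕ) (v u : ℕ → ℕ)
    (hx : x0 < c) (hB : B < c) (hρ : ∀ z ∈ ψ.free.erase y, ρ z < c)
    (hv0 : v x0 = 0) (hvB : v B = w)
    (hvu : ∀ z ∈ ψ.free.erase y, v (ρ z) = u z)
    (huw : ∀ z ∈ ψ.free.erase y, u z ≤ w) :
    (FOSat σ L (.disj (T x0 B ψ b (Function.update ρ y x0) c)
        (.ex c (.conj (.lt x0 c) (.conj (.disj (.lt c B) (.eq c B))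
          (T x0 B ψ b (Function.update ρ y c) (c+1)))))) v
      ↔ ∃ n, n ≤ w ∧ polar b (FOSat σ' ((w + 1 : ℕ) : ℕ∞) ψ (Function.update u y n))) := by
  have hne_x0c : x0 ≠ c := Nat.ne_of_lt hx
  have hne_Bc : B ≠ c := Nat.ne_of_lt hB
  have ih0 : FOSat σ L (T x0 B ψ b (Function.update ρ y x0) c) v ↔
      polar b (FOSat σ' ((w + 1 : ℕ) : ℕ∞) ψ (Function.update u y 0)) := by
    refine ih b _ c v _ hx hB ?_ hv0 hvB ?_ ?_ <;> intro z hz <;>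
      rcases eq_or_ne z y with rfl | hzy
    · rw [Function.update_self]; exact hx
    · rw [Function.update_of_ne hzy]; exact hρ z (Finset.mem_erase.mpr ⟨hzy, hz⟩)
    · rw [Function.update_self, Function.update_self]; exact hv0
    · rw [Function.update_of_ne hzy, Function.update_of_ne hzy]
      exact hvu z (Finset.mem_erase.mpr ⟨hzy, hz⟩)
    · rw [Function.update_self]; exact Nat.zero_le w
    · rw [Function.update_of_ne hzy]; exact huw z (Finset.mem_erase.mpr ⟨hzy, hz⟩)
  have ihn : ∀ n : ℕ, n ≤ w →
      (FOSat σ L (T x0 B ψ b (Function.update ρ y c) (c+1)) (Function.update v c n) ↔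
        polar b (FOSat σ' ((w + 1 : ℕ) : ℕ∞) ψ (Function.update u y n))) := by
    intro n hnw
    refine ih b _ (c+1) _ _ (lt_trans hx (Nat.lt_succ_self c))
      (lt_trans hB (Nat.lt_succ_self c)) ?_ ?_ ?_ ?_ ?_
    · intro z hz
      rcases eq_or_ne z y with rfl | hzy
      · rw [Function.update_self]; exact Nat.lt_succ_self c
      · rw [Function.update_of_ne hzy]
        exact lt_trans (hρ z (Finset.mem_erase.mpr ⟨hzy, hz⟩)) (Nat.lt_succ_self c)
    · rw [Function.update_of_ne hne_x0c]; exact hv0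
    · rw [Function.update_of_ne hne_Bc]; exact hvB
    · intro z hz
      rcases eq_or_ne z y with rfl | hzy
      · rw [Function.update_self, Function.update_self, Function.update_self]
      · rw [Function.update_of_ne hzy, Function.update_of_ne hzy,
          Function.update_of_ne (Nat.ne_of_lt (hρ z (Finset.mem_erase.mpr ⟨hzy, hz⟩)))]
        exact hvu z (Finset.mem_erase.mpr ⟨hzy, hz⟩)
    · intro z hz
      rcases eq_or_ne z y with rfl | hzy
      · rw [Function.update_self]; exact hnw
      · rw [Function.update_of_ne hzy]; exact huw z (Finset.mem_erase.mpr ⟨hzy, hz⟩)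
  constructor
  · intro h
    simp only [FOSat] at h
    rcases h with h | ⟨n, hnL, h1, h2, h3⟩
    · exact ⟨0, Nat.zero_le w, ih0.mp h⟩
    · rw [Function.update_self, Function.update_of_ne hne_Bc, hvB] at h2
      have hnw : n ≤ w := by omega
      exact ⟨n, hnw, (ihn n hnw).mp h3⟩
  · rintro ⟨n, hnw, hp⟩
    simp only [FOSat]
    rcases Nat.eq_zero_or_pos n with rfl | hn0
    · exact Or.inl (ih0.mpr hp)
    · refine Or.inr ⟨n, lt_of_le_of_lt (Nat.cast_le.mpr hnw) hwL, ?_, ?_, (ihn n hnw).mpr hp⟩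
      · rw [Function.update_of_ne hne_x0c, Function.update_self, hv0]; exact hn0
      · rw [Function.update_self, Function.update_of_ne hne_Bc, hvB]; omega

/-- Semantics of the relativized bounded-universal shape. -/
lemma conj_shape (hwL : (w : ℕ∞) < L) (ψ : FOW PL) (y : ℕ) (b : Bool)
    (ih : ∀ (b : Bool) (ρ : ℕ → ℕ) (c : ℕ) (v u : ℕ → ℕ),
      x0 < c → B < c → (∀ z ∈ ψ.free, ρ z < c) → v x0 = 0 → v B = w →
      (∀ z ∈ ψ.free, v (ρ z) = u z) → (∀ z ∈ ψ.free, u z ≤ w) →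
      (FOSat σ L (T x0 B ψ b ρ c) v ↔ polar b (FOSat σ' ((w + 1 : ℕ) : ℕ∞) ψ u)))
    (ρ : ℕ → ℕ) (c : ℕ) (v u : ℕ → ℕ)
    (hx : x0 < c) (hB : B < c) (hρ : ∀ z ∈ ψ.free.erase y, ρ z < c)
    (hv0 : v x0 = 0) (hvB : v B = w)
    (hvu : ∀ z ∈ ψ.free.erase y, v (ρ z) = u z)
    (huw : ∀ z ∈ ψ.free.erase y, u z ≤ w) :
    (FOSat σ L (.conj (T x0 B ψ b (Function.update ρ y x0) c)
        (.conj (.all c (FOW.impl (.conj (.lt x0 c) (.lt c B))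
            (T x0 B ψ b (Function.update ρ y c) (c+1))))
          (T x0 B ψ b (Function.update ρ y B) c))) v
      ↔ ∀ n, n ≤ w → polar b (FOSat σ' ((w + 1 : ℕ) : ℕ∞) ψ (Function.update u y n))) := by
  have hne_x0c : x0 ≠ c := Nat.ne_of_lt hx
  have hne_Bc : B ≠ c := Nat.ne_of_lt hB
  have ih0 : FOSat σ L (T x0 B ψ b (Function.update ρ y x0) c) v ↔
      polar b (FOSat σ' ((w + 1 : ℕ) : ℕ∞) ψ (Function.update u y 0)) := by
    refine ih b _ c v _ hx hB ?_ hv0 hvB ?_ ?_ <;> intro z hz <;>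
      rcases eq_or_ne z y with rfl | hzy
    · rw [Function.update_self]; exact hx
    · rw [Function.update_of_ne hzy]; exact hρ z (Finset.mem_erase.mpr ⟨hzy, hz⟩)
    · rw [Function.update_self, Function.update_self]; exact hv0
    · rw [Function.update_of_ne hzy, Function.update_of_ne hzy]
      exact hvu z (Finset.mem_erase.mpr ⟨hzy, hz⟩)
    · rw [Function.update_self]; exact Nat.zero_le w
    · rw [Function.update_of_ne hzy]; exact huw z (Finset.mem_erase.mpr ⟨hzy, hz⟩)
  have ihB : FOSat σ L (T x0 B ψ b (Function.update ρ y B) c) v ↔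
      polar b (FOSat σ' ((w + 1 : ℕ) : ℕ∞) ψ (Function.update u y w)) := by
    refine ih b _ c v _ hx hB ?_ hv0 hvB ?_ ?_ <;> intro z hz <;>
      rcases eq_or_ne z y with rfl | hzy
    · rw [Function.update_self]; exact hB
    · rw [Function.update_of_ne hzy]; exact hρ z (Finset.mem_erase.mpr ⟨hzy, hz⟩)
    · rw [Function.update_self, Function.update_self]; exact hvB
    · rw [Function.update_of_ne hzy, Function.update_of_ne hzy]
      exact hvu z (Finset.mem_erase.mpr ⟨hzy, hz⟩)
    · rw [Function.update_self]
    · rw [Function.update_of_ne hzy]; exact huw z (Finset.mem_erase.mpr ⟨hzy, hz⟩)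
  have ihn : ∀ n : ℕ, n ≤ w →
      (FOSat σ L (T x0 B ψ b (Function.update ρ y c) (c+1)) (Function.update v c n) ↔
        polar b (FOSat σ' ((w + 1 : ℕ) : ℕ∞) ψ (Function.update u y n))) := by
    intro n hnw
    refine ih b _ (c+1) _ _ (lt_trans hx (Nat.lt_succ_self c))
      (lt_trans hB (Nat.lt_succ_self c)) ?_ ?_ ?_ ?_ ?_
    · intro z hz
      rcases eq_or_ne z y with rfl | hzy
      · rw [Function.update_self]; exact Nat.lt_succ_self c
      · rw [Function.update_of_ne hzy]
        exact lt_trans (hρ z (Finset.mem_erase.mpr ⟨hzy, hz⟩)) (Nat.lt_succ_self c)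
    · rw [Function.update_of_ne hne_x0c]; exact hv0
    · rw [Function.update_of_ne hne_Bc]; exact hvB
    · intro z hz
      rcases eq_or_ne z y with rfl | hzy
      · rw [Function.update_self, Function.update_self, Function.update_self]
      · rw [Function.update_of_ne hzy, Function.update_of_ne hzy,
          Function.update_of_ne (Nat.ne_of_lt (hρ z (Finset.mem_erase.mpr ⟨hzy, hz⟩)))]
        exact hvu z (Finset.mem_erase.mpr ⟨hzy, hz⟩)
    · intro z hz
      rcases eq_or_ne z y with rfl | hzy
      · rw [Function.update_self]; exact hnw
      · rw [Function.update_of_ne hzy]; exact huw z (Finset.mem_erase.mpr ⟨hzy, hz⟩)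
  constructor
  · intro h
    simp only [FOSat, FOW.impl] at h
    obtain ⟨h0, hmid, hlast⟩ := h
    intro n hnw
    by_cases hn0 : n = 0
    · subst hn0; exact ih0.mp h0
    by_cases hnww : n = w
    · subst hnww; exact ihB.mp hlast
    have hnlt : 0 < n ∧ n < w := by omega
    have hm := hmid n (lt_of_le_of_lt (Nat.cast_le.mpr hnw) hwL)
    rcases hm with hcon | hT
    · exfalso
      apply hcon
      refine ⟨?_, ?_⟩
      · rw [Function.update_of_ne hne_x0c, Function.update_self, hv0]; exact hnlt.1
      · rw [Function.update_self, Function.update_of_ne hne_Bc, hvB]; exact hnlt.2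
    · exact (ihn n hnw).mp hT
  · intro h
    simp only [FOSat, FOW.impl]
    refine ⟨ih0.mpr (h 0 (Nat.zero_le w)), ?_, ihB.mpr (h w le_rfl)⟩
    intro n hnL
    by_cases hcon : 0 < n ∧ n < w
    · exact Or.inr ((ihn n (le_of_lt hcon.2)).mpr (h n (le_of_lt hcon.2)))
    · refine Or.inl ?_
      rintro ⟨ha, hb⟩
      rw [Function.update_of_ne hne_x0c, Function.update_self, hv0] at ha
      rw [Function.update_self, Function.update_of_ne hne_Bc, hvB] at hb
      exact hcon ⟨ha, hb⟩

/-- Main semantic lemma: `T x0 B φ b ρ c` over the full word with the bound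
variable `B` valued `w` expresses (the `b`-polarity of) `φ` over the prefix of
length `w + 1`. -/
lemma T_sat (hwL : (w : ℕ∞) < L) (hσ : ∀ n : ℕ, n ≤ w → σ' n = σ n) (φ : FOW PL) :
    ∀ (b : Bool) (ρ : ℕ → ℕ) (c : ℕ) (v u : ℕ → ℕ),
      x0 < c → B < c → (∀ z ∈ φ.free, ρ z < c) → v x0 = 0 → v B = w →
      (∀ z ∈ φ.free, v (ρ z) = u z) → (∀ z ∈ φ.free, u z ≤ w) →
      (FOSat σ L (T x0 B φ b ρ c) v ↔ polar b (FOSat σ' ((w + 1 : ℕ) : ℕ∞) φ u)) := by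
  have cast1 : ∀ n : ℕ, ((n : ℕ∞) < ((w + 1 : ℕ) : ℕ∞)) ↔ n ≤ w := by
    intro n; rw [Nat.cast_lt]; omega
  induction φ with
  | lt a b' =>
    intro b ρ c v u hx hB hρ hv0 hvB hvu huw
    have ha := hvu a (by simp [FOW.free])
    have hb := hvu b' (by simp [FOW.free])
    cases b <;> simp only [T, FOSat, polar, ha, hb] <;> omega
  | eq a b' =>
    intro b ρ c v u hx hB hρ hv0 hvB hvu huw
    have ha := hvu a (by simp [FOW.free])
    have hb := hvu b' (by simp [FOW.free])
    cases b <;> simp only [T, FOSat, polar, ha, hb] <;> omega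
  | pred p a =>
    intro b ρ c v u hx hB hρ hv0 hvB hvu huw
    have ha := hvu a (by simp [FOW.free])
    have hs : σ' (u a) = σ (u a) := hσ _ (huw a (by simp [FOW.free]))
    cases b <;> simp only [T, FOSat, polar, ha, hs]
  | not ψ ih =>
    intro b ρ c v u hx hB hρ hv0 hvB hvu huw
    simp only [T]
    rw [ih (!b) ρ c v u hx hB hρ hv0 hvB hvu huw]
    exact polar_not b _
  | disj ψ χ ih1 ih2 =>
    intro b ρ c v u hx hB hρ hv0 hvB hvu huw
    have h1 := ih1 b ρ c v u hx hB (fun z hz => hρ z (by simp [FOW.free, hz])) hv0 hvB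
      (fun z hz => hvu z (by simp [FOW.free, hz])) (fun z hz => huw z (by simp [FOW.free, hz]))
    have h2 := ih2 b ρ c v u hx hB (fun z hz => hρ z (by simp [FOW.free, hz])) hv0 hvB
      (fun z hz => hvu z (by simp [FOW.free, hz])) (fun z hz => huw z (by simp [FOW.free, hz]))
    cases b
    · simp only [T, FOSat] at h1 h2 ⊢
      rw [h1, h2]
      simp only [polar, FOSat]
      tauto
    · simp only [T, FOSat] at h1 h2 ⊢
      rw [h1, h2]
      simp only [polar, FOSat]
  | conj ψ χ ih1 ih2 =>
    intro b ρ c v u hx hB hρ hv0 hvB hvu huw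
    have h1 := ih1 b ρ c v u hx hB (fun z hz => hρ z (by simp [FOW.free, hz])) hv0 hvB
      (fun z hz => hvu z (by simp [FOW.free, hz])) (fun z hz => huw z (by simp [FOW.free, hz]))
    have h2 := ih2 b ρ c v u hx hB (fun z hz => hρ z (by simp [FOW.free, hz])) hv0 hvB
      (fun z hz => hvu z (by simp [FOW.free, hz])) (fun z hz => huw z (by simp [FOW.free, hz]))
    cases b
    · simp only [T, FOSat] at h1 h2 ⊢
      rw [h1, h2]
      simp only [polar, FOSat]
      tauto
    · simp only [T, FOSat] at h1 h2 ⊢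
      rw [h1, h2]
      simp only [polar, FOSat]
  | ex y ψ ih =>
    intro b ρ c v u hx hB hρ hv0 hvB hvu huw
    cases b
    · simp only [T]
      rw [conj_shape x0 B σ σ' L w hwL ψ y false ih ρ c v u hx hB hρ hv0 hvB hvu huw]
      simp only [polar, FOSat]
      constructor
      · rintro h ⟨n, hn, hsat⟩
        exact h n ((cast1 n).mp hn) hsat
      · intro h n hn hsat
        exact h ⟨n, (cast1 n).mpr hn, hsat⟩
    · simp only [T]
      rw [disj_shape x0 B σ σ' L w hwL ψ y true ih ρ c v u hx hB hρ hv0 hvB hvu huw]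
      simp only [polar, FOSat]
      constructor
      · rintro ⟨n, hn, hsat⟩; exact ⟨n, (cast1 n).mpr hn, hsat⟩
      · rintro ⟨n, hn, hsat⟩; exact ⟨n, (cast1 n).mp hn, hsat⟩
  | all y ψ ih =>
    intro b ρ c v u hx hB hρ hv0 hvB hvu huw
    cases b
    · simp only [T]
      rw [disj_shape x0 B σ σ' L w hwL ψ y false ih ρ c v u hx hB hρ hv0 hvB hvu huw]
      simp only [polar, FOSat]
      constructor
      · rintro ⟨n, hn, hns⟩ hall
        exact hns (hall n ((cast1 n).mpr hn))
      · intro h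
        push_neg at h
        obtain ⟨n, hn, hns⟩ := h
        exact ⟨n, (cast1 n).mp hn, hns⟩
    · simp only [T]
      rw [conj_shape x0 B σ σ' L w hwL ψ y true ih ρ c v u hx hB hρ hv0 hvB hvu huw]
      simp only [polar, FOSat]
      constructor
      · intro h n hn; exact h n ((cast1 n).mp hn)
      · intro h n hn; exact h n ((cast1 n).mpr hn)

end Shapes

end CoSafetyAux
open CoSafetyPaper in
/-- For every FO formula φ(x) with exactly one free variable
there is a coSafetyFO formula φ'(x) with exactly one free variable such that
`L_fin(φ'(x)) = L_fin(φ(x))·(2^Σ)^*`. -/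
theorem fo_to_cosafetyFO_suffix_closure
    (PL : Type) [Fintype PL] (φ : FOW PL) (h : HasOneFree φ) :
    ∃ φ' : FOW PL, CoSafetyFO φ' ∧ HasOneFree φ' ∧
      LfinFO φ' = catFin (LfinFO φ) := by
  classical
  obtain ⟨x0, hx0⟩ := h
  have hx0W : x0 ≠ x0 + 1 := by omega
  refine ⟨.conj (.eq x0 x0) (.disj (CoSafetyAux.T x0 x0 φ true (fun _ => x0) (x0+2))
      (.ex (x0+1) (.conj (.lt x0 (x0+1))
        (CoSafetyAux.T x0 (x0+1) φ true (fun _ => x0) (x0+2))))), ?_, ?_, ?_⟩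
  · exact CoSafetyFO.conj (CoSafetyFO.eq _ _)
      (CoSafetyFO.disj (CoSafetyAux.T_cosafety _ _ _ _ _ _)
        (CoSafetyFO.ex x0 (x0+1) (CoSafetyAux.T_cosafety _ _ _ _ _ _)))
  · refine ⟨x0, ?_⟩
    apply Finset.ext
    intro m
    simp only [FOW.free, Finset.mem_union, Finset.mem_erase, Finset.mem_insert,
      Finset.mem_singleton]
    constructor
    · intro hm
      have hA : m ∈ (CoSafetyAux.T x0 x0 φ true (fun _ => x0) (x0+2)).free → m = x0 := by
        intro hmA
        rcases CoSafetyAux.T_free x0 x0 φ true _ (x0+2) (by omega) (by omega) m hmA with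
          h' | h' | ⟨z, _, h'⟩ <;> exact h'
      have hBm : m ∈ (CoSafetyAux.T x0 (x0+1) φ true (fun _ => x0) (x0+2)).free →
          m = x0 ∨ m = x0 + 1 := by
        intro hmB
        rcases CoSafetyAux.T_free x0 (x0+1) φ true _ (x0+2) (by omega) (by omega) m hmB with
          h' | h' | ⟨z, _, h'⟩
        · exact Or.inl h'
        · exact Or.inr h'
        · exact Or.inl h'
      rcases hm with (rfl | rfl) | (h | ⟨hmW, (rfl | rfl) | h⟩)
      · rfl
      · rfl
      · exact hA h
      · rfl
      · exact absurd rfl hmW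
      · rcases hBm h with rfl | rfl
        · rfl
        · exact absurd rfl hmW
    · rintro rfl
      exact Or.inl (Or.inl rfl)
  · ext xs
    simp only [LfinFO, catFin, Set.mem_setOf_eq]
    constructor
    · rintro ⟨hne, hsat⟩
      have hlen : 0 < xs.length := List.length_pos_iff.mpr hne
      simp only [FOSat] at hsat
      obtain ⟨-, hd⟩ := hsat
      rcases hd with hA | ⟨n, hnL, hlt, hT⟩
      · -- prefix of length 1
        have hT := (CoSafetyAux.T_sat x0 x0 (wordOf xs) (wordOf xs) (xs.length : ℕ∞) 0
            (by exact_mod_cast hlen) (fun _ _ => rfl) φ true (fun _ => x0) (x0+2)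
            (fun _ => 0) (fun _ => 0) (by omega) (by omega) (fun z _ => by show x0 < x0 + 2; omega)
            rfl rfl (fun z _ => rfl) (fun z _ => le_rfl)).mp hA
        refine ⟨xs.take 1, ⟨?_, ?_⟩, xs.drop 1, (List.take_append_drop 1 xs).symm⟩
        · have h1 : (xs.take 1).length = 1 := by rw [List.length_take]; omega
          intro hcon
          rw [hcon] at h1
          simp at h1
        · have h1 : (xs.take 1).length = 1 := by rw [List.length_take]; omega
          rw [h1]
          have hT2 : FOSat (wordOf xs) ((1 : ℕ) : ℕ∞) φ (fun _ => 0) := by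
            simpa only [CoSafetyAux.polar, Nat.zero_add] using hT
          refine (CoSafetyAux.FOSat_congr _ _ _ ?_ φ _ ?_).mp hT2
          · intro k hk
            have hk1 : k < 1 := by exact_mod_cast hk
            exact (CoSafetyAux.wordOf_take xs 1 k hk1).symm
          · intro z _
            exact (CoSafetyAux.wordOf_take xs 1 0 Nat.one_pos).symm
      · -- prefix of length n + 1
        have hn0 : 0 < n := by
          rwa [Function.update_of_ne hx0W, Function.update_self] at hlt
        have hnlen : n < xs.length := by exact_mod_cast hnL
        have hT' := (CoSafetyAux.T_sat x0 (x0+1) (wordOf xs) (wordOf xs) (xs.length : ℕ∞) n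
            hnL (fun _ _ => rfl) φ true (fun _ => x0) (x0+2)
            (Function.update (fun _ => 0) (x0+1) n) (fun _ => 0)
            (by omega) (by omega) (fun z _ => by show x0 < x0 + 2; omega)
            (by rw [Function.update_of_ne hx0W]) (Function.update_self _ _ _)
            (fun z _ => by show Function.update (fun _ => (0:ℕ)) (x0+1) n x0 = 0; rw [Function.update_of_ne hx0W]) (fun z _ => Nat.zero_le n)).mp hT
        refine ⟨xs.take (n+1), ⟨?_, ?_⟩, xs.drop (n+1), (List.take_append_drop (n+1) xs).symm⟩
        · have h1 : (xs.take (n+1)).length = n+1 := by rw [List.length_take]; omega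
          intro hcon
          rw [hcon] at h1
          simp at h1
        · have h1 : (xs.take (n+1)).length = n+1 := by rw [List.length_take]; omega
          rw [h1]
          have hT2 : FOSat (wordOf xs) ((n + 1 : ℕ) : ℕ∞) φ (fun _ => 0) := hT'
          refine (CoSafetyAux.FOSat_congr _ _ _ ?_ φ _ ?_).mp hT2
          · intro k hk
            have hk1 : k < n + 1 := by exact_mod_cast hk
            exact (CoSafetyAux.wordOf_take xs (n+1) k hk1).symm
          · intro z _
            exact (CoSafetyAux.wordOf_take xs (n+1) 0 (by omega)).symm
    · rintro ⟨u, ⟨hune, husat⟩, vtl, rfl⟩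
      have hul : 0 < u.length := List.length_pos_iff.mpr hune
      have hne2 : u ++ vtl ≠ [] := by
        intro hcon
        exact hune (List.append_eq_nil_iff.mp hcon).1
      have hwlen : (u.length - 1) + 1 = u.length := by omega
      have husat' : FOSat (wordOf u) (((u.length - 1) + 1 : ℕ) : ℕ∞) φ (fun _ => 0) := by
        rw [hwlen]; exact husat
      have hσ : ∀ k : ℕ, k ≤ u.length - 1 → wordOf u k = wordOf (u ++ vtl) k :=
        fun k hk => (CoSafetyAux.wordOf_append u vtl k (by omega)).symm
      have hwL : ((u.length - 1 : ℕ) : ℕ∞) < (((u ++ vtl).length : ℕ) : ℕ∞) := by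
        rw [List.length_append]
        exact_mod_cast (by omega : u.length - 1 < u.length + vtl.length)
      refine ⟨hne2, ?_⟩
      simp only [FOSat]
      refine ⟨by trivial, ?_⟩
      rcases Nat.eq_zero_or_pos (u.length - 1) with hw0 | hwpos
      · left
        refine (CoSafetyAux.T_sat x0 x0 (wordOf (u ++ vtl)) (wordOf u)
            ((u ++ vtl).length : ℕ∞) (u.length - 1) hwL hσ φ true (fun _ => x0) (x0+2)
            (fun _ => 0) (fun _ => 0) (by omega) (by omega) (fun z _ => by show x0 < x0 + 2; omega)
            rfl hw0.symm (fun z _ => rfl) (fun z _ => Nat.zero_le _)).mpr husat'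
      · right
        refine ⟨u.length - 1, hwL, ?_, ?_⟩
        · rw [Function.update_of_ne hx0W, Function.update_self]
          exact hwpos
        · exact (CoSafetyAux.T_sat x0 (x0+1) (wordOf (u ++ vtl)) (wordOf u)
            ((u ++ vtl).length : ℕ∞) (u.length - 1) hwL hσ φ true (fun _ => x0) (x0+2)
            (Function.update (fun _ => 0) (x0+1) (u.length - 1)) (fun _ => 0)
            (by omega) (by omega) (fun z _ => by show x0 < x0 + 2; omega)
            (by rw [Function.update_of_ne hx0W]) (Function.update_self _ _ _)
            (fun z _ => by
              show Function.update (fun _ => (0:ℕ)) (x0+1) (u.length - 1) x0 = 0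
              rw [Function.update_of_ne hx0W])
            (fun z _ => Nat.zero_le _)).mpr husat'
end
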